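/- arXiv:2103.13330 — 4 statements merged into one kernel-verified Lean document; each statement's English description precedes it below -/
import Mathlib

section
/- Let Ω = (0,1)^d with d > 1, let w, f be bounded measurable functions on Ω with w(x) ≥ c₁ > 0 for almost every x and ‖w‖_{L^∞(Ω)} < ∞, let g be a bounded measurable function on ∂Ω, and define L(u) = ½∫_Ω ‖∇u(x)‖₂² dx + ½∫_Ω w(x)u(x)² dx − ∫_Ω f(x)u(x) dx − ∫_{∂Ω} g(y)u(y) dH^{d−1}(y). Suppose u* is a bounded C¹ function with bounded gradient on a neighborhood of the closed cube satisfying the weak formulation: for every bounded C¹ function v with bounded gradient, ∫_Ω ∇u*·∇v dx + ∫_Ω w u* v dx = ∫_Ω f v dx + ∫_{∂Ω} g v dH^{d−1}. Then for every bounded C¹ function u with bounded gradient, (min(c₁,1)/2)·‖u − u*‖²_{H¹(Ω)} ≤ L(u) − L(u*) ≤ (max(‖w‖_{L^∞(Ω)},1)/2)·‖u − u*‖²_{H¹(Ω)}. -/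
open MeasureTheory

noncomputable section

/-- The open unit cube `Ω = (0,1)^d` in `ℝ^d`. -/
def openCube (d : ℕ) : Set (EuclideanSpace ℝ (Fin d)) := {x | ∀ i, x i ∈ Set.Ioo (0:ℝ) 1}

/-- The closed unit cube `[0,1]^d` in `ℝ^d`. -/
def closedCube (d : ℕ) : Set (EuclideanSpace ℝ (Fin d)) := {x | ∀ i, x i ∈ Set.Icc (0:ℝ) 1}

/-- `u` is a bounded `C¹` function with bounded gradient on a neighborhood of the closed cube. -/
def IsNice (d : ℕ) (u : EuclideanSpace ℝ (Fin d) → ℝ) : Prop :=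
  ∃ U : Set (EuclideanSpace ℝ (Fin d)), IsOpen U ∧ closedCube d ⊆ U ∧ ContDiffOn ℝ 1 u U ∧
    (∃ C, ∀ x ∈ U, |u x| ≤ C) ∧ (∃ C, ∀ x ∈ U, ‖gradient u x‖ ≤ C)

/-- The Ritz energy functional
`L(u) = ½∫_Ω ‖∇u‖² + ½∫_Ω w u² − ∫_Ω f u − ∫_{∂Ω} g u dH^{d-1}`. -/
def ritzEnergy (d : ℕ) (w f g : EuclideanSpace ℝ (Fin d) → ℝ)
    (u : EuclideanSpace ℝ (Fin d) → ℝ) : ℝ :=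
  (1/2) * (∫ x in openCube d, ‖gradient u x‖^2) +
    (1/2) * (∫ x in openCube d, w x * (u x)^2) -
    (∫ x in openCube d, f x * u x) -
    ∫ y in frontier (openCube d), g y * u y ∂(μH[(d:ℝ) - 1])

/-- `ustar` satisfies the weak formulation of the Neumann problem
`−Δu + wu = f` in `Ω`, `∂u/∂n = g` on `∂Ω`, tested against all bounded `C¹`
functions with bounded gradient. -/
def IsWeakSol (d : ℕ) (w f g ustar : EuclideanSpace ℝ (Fin d) → ℝ) : Prop :=
  ∀ v : EuclideanSpace ℝ (Fin d) → ℝ, IsNice d v →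
    (∫ x in openCube d, (inner ℝ (gradient ustar x) (gradient v x) : ℝ)) +
      (∫ x in openCube d, w x * ustar x * v x) =
    (∫ x in openCube d, f x * v x) +
      ∫ y in frontier (openCube d), g y * v y ∂(μH[(d:ℝ) - 1])

/-- The squared `H¹(Ω)` norm `∫_Ω u² + ∫_Ω ‖∇u‖²`. -/
def H1normSq (d : ℕ) (u : EuclideanSpace ℝ (Fin d) → ℝ) : ℝ :=
  (∫ x in openCube d, (u x)^2) + ∫ x in openCube d, ‖gradient u x‖^2

section Helpers

open Set
open scoped NNReal ENNReal InnerProductSpace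

lemma isOpen_openCube (d : ℕ) : IsOpen (openCube d) := by
  have : openCube d = ⋂ i, (EuclideanSpace.proj (𝕜 := ℝ) i) ⁻¹' Set.Ioo (0:ℝ) 1 := by
    ext x; simp [openCube, EuclideanSpace.proj]
  rw [this]
  exact isOpen_iInter_of_finite fun i => (isOpen_Ioo).preimage (EuclideanSpace.proj i).continuous

lemma isClosed_closedCube (d : ℕ) : IsClosed (closedCube d) := by
  have : closedCube d = ⋂ i, (EuclideanSpace.proj (𝕜 := ℝ) i) ⁻¹' Set.Icc (0:ℝ) 1 := by
    ext x; simp [closedCube, EuclideanSpace.proj]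
  rw [this]
  exact isClosed_iInter fun i => (isClosed_Icc).preimage (EuclideanSpace.proj i).continuous

lemma openCube_subset_closed (d : ℕ) : openCube d ⊆ closedCube d :=
  fun x hx i => Set.Ioo_subset_Icc_self (hx i)

lemma closedCube_bounded (d : ℕ) : Bornology.IsBounded (closedCube d) := by
  apply Bornology.IsBounded.subset
    (Metric.isBounded_closedBall (x := (0:EuclideanSpace ℝ (Fin d))) (r := d))
  intro x hx
  simp only [Metric.mem_closedBall, dist_zero_right]
  calc ‖x‖ = Real.sqrt (∑ i, ‖x i‖^2) := EuclideanSpace.norm_eq x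
    _ ≤ Real.sqrt (∑ _i : Fin d, 1) := by
        apply Real.sqrt_le_sqrt; apply Finset.sum_le_sum; intro i _
        rw [Real.norm_eq_abs, abs_of_nonneg (hx i).1]
        nlinarith [(hx i).1, (hx i).2]
    _ ≤ d := by
        simp only [Finset.sum_const, Finset.card_univ, Fintype.card_fin, nsmul_eq_mul, mul_one]
        calc Real.sqrt d ≤ Real.sqrt ((d:ℝ)^2) :=
              Real.sqrt_le_sqrt (by exact_mod_cast Nat.le_self_pow two_ne_zero d)
          _ = d := Real.sqrt_sq (by positivity)

lemma volume_openCube_lt_top (d : ℕ) : MeasureTheory.volume (openCube d) < ⊤ :=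
  ((closedCube_bounded d).subset (openCube_subset_closed d)).measure_lt_top

lemma frontier_openCube_subset (d : ℕ) :
    frontier (openCube d) ⊆ {x ∈ closedCube d | ∃ i, x i = 0 ∨ x i = 1} := by
  intro x hx
  have h1 : x ∈ closedCube d :=
    closure_minimal (openCube_subset_closed d) (isClosed_closedCube d) hx.1
  refine ⟨h1, ?_⟩
  have h2 : x ∉ openCube d := by
    rw [← (isOpen_openCube d).interior_eq]; exact hx.2
  simp only [openCube, Set.mem_setOf_eq, not_forall] at h2
  obtain ⟨i, hi⟩ := h2
  rcases h1 i with ⟨hl, hr⟩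
  refine ⟨i, ?_⟩
  by_contra h
  push_neg at h
  exact hi ⟨lt_of_le_of_ne hl (Ne.symm h.1), lt_of_le_of_ne hr h.2⟩

def faceMap (n : ℕ) (i : Fin (n+1)) (c : ℝ) : (Fin n → ℝ) → EuclideanSpace ℝ (Fin (n+1)) :=
  fun x => (WithLp.equiv 2 (Fin (n+1) → ℝ)).symm (i.insertNth c x)

lemma faceMap_lipschitz (n : ℕ) (i : Fin (n+1)) (c : ℝ) :
    LipschitzWith ((n+1 : ℕ) : ℝ≥0) (faceMap n i c) := by
  apply LipschitzWith.of_dist_le_mul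
  intro x y
  rw [EuclideanSpace.dist_eq]
  have hterm : ∀ j : Fin (n+1),
      dist (faceMap n i c x j) (faceMap n i c y j) ^ 2 ≤ dist x y ^ 2 := by
    refine Fin.succAboveCases i ?_ ?_
    · simp [faceMap, dist_nonneg]
    · intro j
      simp only [faceMap, WithLp.equiv_symm_apply, WithLp.ofLp_toLp, Fin.insertNth_apply_succAbove]
      have := dist_le_pi_dist x y j
      nlinarith [(dist_nonneg : (0:ℝ) ≤ dist (x j) (y j)), (dist_nonneg : (0:ℝ) ≤ dist x y)]
  calc Real.sqrt (∑ j, dist (faceMap n i c x j) (faceMap n i c y j) ^ 2)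
      ≤ Real.sqrt (∑ _j : Fin (n+1), dist x y ^ 2) := by
        apply Real.sqrt_le_sqrt; exact Finset.sum_le_sum fun j _ => hterm j
    _ = Real.sqrt ((n+1 : ℕ) * dist x y ^ 2) := by
        simp [Finset.sum_const, Finset.card_univ]
    _ ≤ ((n+1 : ℕ) : ℝ) * dist x y := by
        rw [show ((n+1:ℕ):ℝ) * dist x y = Real.sqrt ((((n+1:ℕ):ℝ) * dist x y)^2) from
          (Real.sqrt_sq (by positivity)).symm]
        apply Real.sqrt_le_sqrt
        have h1 : (1:ℝ) ≤ ((n+1:ℕ):ℝ) := by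
          exact_mod_cast Nat.one_le_iff_ne_zero.mpr (Nat.succ_ne_zero n)
        nlinarith [sq_nonneg (dist x y), (dist_nonneg : (0:ℝ) ≤ dist x y)]

open MeasureTheory in
lemma frontier_hausdorff_lt_top' (n : ℕ) :
    μH[((n+1:ℕ) : ℝ) - 1] (frontier (openCube (n+1))) < ⊤ := by
  have hexp : ((n+1:ℕ) : ℝ) - 1 = (n : ℝ) := by push_cast; ring
  rw [hexp]
  set S : Set (Fin n → ℝ) := Set.univ.pi fun _ => Set.Icc (0:ℝ) 1 with hS
  have hsub : frontier (openCube (n+1)) ⊆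
      ⋃ (i : Fin (n+1)), ⋃ (b : Bool), faceMap n i (if b then 1 else 0) '' S := by
    intro x hx
    obtain ⟨hxc, i, hi⟩ := frontier_openCube_subset (n+1) hx
    have hmem : (fun k => x (i.succAbove k)) ∈ S := fun k _ => hxc (i.succAbove k)
    have hins : ∀ c : ℝ, x i = c → x ∈ faceMap n i c '' S := by
      intro c hc
      refine ⟨fun k => x (i.succAbove k), hmem, ?_⟩
      simp only [faceMap]
      have : i.insertNth c (fun k => x (i.succAbove k)) = fun j => x j := by
        rw [← hc]
        exact Fin.insertNth_self_removeNth i (fun j => x j)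
      rw [this]
      rfl
    rcases hi with h0 | h1
    · exact Set.mem_iUnion.mpr ⟨i, Set.mem_iUnion.mpr ⟨false, hins 0 h0⟩⟩
    · exact Set.mem_iUnion.mpr ⟨i, Set.mem_iUnion.mpr ⟨true, hins 1 h1⟩⟩
  have hface : ∀ (i : Fin (n+1)) (c : ℝ), μH[(n:ℝ)] (faceMap n i c '' S) < ⊤ := by
    intro i c
    have hle := (faceMap_lipschitz n i c).hausdorffMeasure_image_le
      (by positivity : (0:ℝ) ≤ (n:ℝ)) S
    have hSmeas : μH[(n:ℝ)] S < ⊤ := by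
      have hcard : ((Fintype.card (Fin n) : ℝ)) = (n:ℝ) := by simp
      rw [← hcard, hausdorffMeasure_pi_real]
      have : volume S = 1 := by
        rw [hS, volume_pi_pi]
        simp [Real.volume_Icc]
      simp [this]
    calc μH[(n:ℝ)] (faceMap n i c '' S) ≤ _ := hle
      _ < ⊤ := by
        apply ENNReal.mul_lt_top _ hSmeas
        exact ENNReal.rpow_lt_top_of_nonneg (by positivity) (by simp)
  calc μH[(n:ℝ)] (frontier (openCube (n+1))) ≤
      μH[(n:ℝ)] (⋃ (i : Fin (n+1)), ⋃ (b : Bool), faceMap n i (if b then 1 else 0) '' S) :=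
        measure_mono hsub
    _ ≤ ∑' (i : Fin (n+1)), μH[(n:ℝ)] (⋃ (b : Bool), faceMap n i (if b then 1 else 0) '' S) :=
        measure_iUnion_le _
    _ < ⊤ := by
        rw [tsum_fintype _]
        apply ENNReal.sum_lt_top.mpr
        intro i _
        calc μH[(n:ℝ)] (⋃ (b : Bool), faceMap n i (if b then 1 else 0) '' S)
            ≤ ∑' (b : Bool), μH[(n:ℝ)] (faceMap n i (if b then 1 else 0) '' S) :=
              measure_iUnion_le _
          _ < ⊤ := by
              rw [tsum_fintype _]
              exact ENNReal.sum_lt_top.mpr fun b _ => hface i _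

open MeasureTheory in
lemma frontier_hausdorff_lt_top {d : ℕ} (hd : 1 ≤ d) :
    μH[(d : ℝ) - 1] (frontier (openCube d)) < ⊤ := by
  obtain ⟨n, rfl⟩ : ∃ n, d = n + 1 := ⟨d - 1, (Nat.succ_pred_eq_of_pos hd).symm⟩
  exact frontier_hausdorff_lt_top' n

lemma gradient_continuousOn {d : ℕ} {U : Set (EuclideanSpace ℝ (Fin d))}
    {u : EuclideanSpace ℝ (Fin d) → ℝ} (hU : IsOpen U) (h : ContDiffOn ℝ 1 u U) :
    ContinuousOn (gradient u) U := by
  have h1 := h.continuousOn_fderiv_of_isOpen hU le_rfl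
  exact (InnerProductSpace.toDual ℝ
    (EuclideanSpace ℝ (Fin d))).symm.continuous.comp_continuousOn h1

lemma gradient_sub' {d : ℕ} {u v : EuclideanSpace ℝ (Fin d) → ℝ}
    {x : EuclideanSpace ℝ (Fin d)} (hu : DifferentiableAt ℝ u x)
    (hv : DifferentiableAt ℝ v x) :
    gradient (u - v) x = gradient u x - gradient v x := by
  unfold gradient
  have : fderiv ℝ (u - v) x = fderiv ℝ u x - fderiv ℝ v x := by
    simpa [Pi.sub_def] using fderiv_sub hu hv
  rw [this, map_sub]

open MeasureTheory in
lemma integrableOn_cube {d : ℕ} {F : EuclideanSpace ℝ (Fin d) → ℝ}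
    (hm : AEStronglyMeasurable F (volume.restrict (openCube d))) {C : ℝ}
    (hb : ∀ x ∈ openCube d, |F x| ≤ C) : IntegrableOn F (openCube d) := by
  haveI : IsFiniteMeasure (volume.restrict (openCube d)) :=
    ⟨by rw [Measure.restrict_apply_univ]; exact volume_openCube_lt_top d⟩
  refine Integrable.mono' (integrable_const C) hm ?_
  filter_upwards [ae_restrict_mem (isOpen_openCube d).measurableSet] with x hx
  simpa [Real.norm_eq_abs] using hb x hx

open MeasureTheory in
lemma integrableOn_frontier {d : ℕ} (hd : 1 ≤ d) {F : EuclideanSpace ℝ (Fin d) → ℝ}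
    (hm : AEStronglyMeasurable F ((μH[(d:ℝ)-1]).restrict (frontier (openCube d))))
    {C : ℝ} (hb : ∀ x ∈ frontier (openCube d), |F x| ≤ C) :
    IntegrableOn F (frontier (openCube d)) (μH[(d:ℝ)-1]) := by
  haveI : IsFiniteMeasure ((μH[(d:ℝ)-1]).restrict (frontier (openCube d))) :=
    ⟨by rw [Measure.restrict_apply_univ]; exact frontier_hausdorff_lt_top hd⟩
  refine Integrable.mono' (integrable_const C) hm ?_
  filter_upwards [ae_restrict_mem (isClosed_frontier.measurableSet)] with x hx
  simpa [Real.norm_eq_abs] using hb x hx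

end Helpers

open scoped NNReal ENNReal

/-- **Coercivity and boundedness of the Ritz energy excess (equation (3.3)).**
For every admissible `u`,
`(min(c₁,1)/2)·‖u−u*‖²_{H¹} ≤ L(u) − L(u*) ≤ (max(‖w‖_{L^∞(Ω)},1)/2)·‖u−u*‖²_{H¹}`. -/
theorem ritzEnergy_excess_bounds (d : ℕ) (hd : 1 < d)
    (w f g : EuclideanSpace ℝ (Fin d) → ℝ) (c₁ : ℝ) (hc₁ : 0 < c₁)
    (hw : Measurable w) (hwb : ∃ C, ∀ x ∈ openCube d, |w x| ≤ C)
    (hwlb : ∀ᵐ x ∂(volume.restrict (openCube d)), c₁ ≤ w x)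
    (hwtop : eLpNorm w ⊤ (volume.restrict (openCube d)) < ⊤)
    (hf : Measurable f) (hfb : ∃ C, ∀ x ∈ openCube d, |f x| ≤ C)
    (hg : Measurable g) (hgb : ∃ C, ∀ y ∈ frontier (openCube d), |g y| ≤ C)
    (ustar : EuclideanSpace ℝ (Fin d) → ℝ)
    (hnice : IsNice d ustar) (hweak : IsWeakSol d w f g ustar) :
    ∀ u : EuclideanSpace ℝ (Fin d) → ℝ, IsNice d u →
      min c₁ 1 / 2 * H1normSq d (u - ustar) ≤
          ritzEnergy d w f g u - ritzEnergy d w f g ustar ∧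
        ritzEnergy d w f g u - ritzEnergy d w f g ustar ≤
          max ((eLpNorm w ⊤ (volume.restrict (openCube d))).toReal) 1 / 2 *
            H1normSq d (u - ustar) := by
  intro u hniceu
  classical
  obtain ⟨U, hUo, hUc, hu1, ⟨Cu, hCu⟩, ⟨Cu', hCu'⟩⟩ := hniceu
  obtain ⟨V, hVo, hVc, hv1, ⟨Cv, hCv⟩, ⟨Cv', hCv'⟩⟩ := hnice
  obtain ⟨Cw, hCw⟩ := hwb
  obtain ⟨Cf, hCf⟩ := hfb
  obtain ⟨Cg, hCg⟩ := hgb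
  have hd1 : 1 ≤ d := le_of_lt hd
  have hΩm : MeasurableSet (openCube d) := (isOpen_openCube d).measurableSet
  have hFm : MeasurableSet (frontier (openCube d)) := isClosed_frontier.measurableSet
  have hΩU : openCube d ⊆ U := fun x hx => hUc (openCube_subset_closed d hx)
  have hΩV : openCube d ⊆ V := fun x hx => hVc (openCube_subset_closed d hx)
  have hFcl : frontier (openCube d) ⊆ closedCube d :=
    fun x hx => (frontier_openCube_subset d hx).1
  have hFU : frontier (openCube d) ⊆ U := fun x hx => hUc (hFcl hx)
  have hFV : frontier (openCube d) ⊆ V := fun x hx => hVc (hFcl hx)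
  set W := U ∩ V with hWdef
  have hWo : IsOpen W := hUo.inter hVo
  have hWc : closedCube d ⊆ W := fun x hx => ⟨hUc hx, hVc hx⟩
  have hΩW : openCube d ⊆ W := fun x hx => hWc (openCube_subset_closed d hx)
  have hFW : frontier (openCube d) ⊆ W := fun x hx => hWc (hFcl hx)
  set e := u - ustar with he
  have heapp : ∀ x, e x = u x - ustar x := fun x => rfl
  have hdiffu : ∀ x ∈ W, DifferentiableAt ℝ u x := fun x hx =>
    (hu1.differentiableOn one_ne_zero).differentiableAt (hUo.mem_nhds hx.1)
  have hdiffv : ∀ x ∈ W, DifferentiableAt ℝ ustar x := fun x hx =>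
    (hv1.differentiableOn one_ne_zero).differentiableAt (hVo.mem_nhds hx.2)
  have hgrad_e : ∀ x ∈ W, gradient e x = gradient u x - gradient ustar x := fun x hx =>
    gradient_sub' (hdiffu x hx) (hdiffv x hx)
  have he1 : ContDiffOn ℝ 1 e W :=
    (hu1.mono Set.inter_subset_left).sub (hv1.mono Set.inter_subset_right)
  -- bounds with absolute-value constants
  have hbw : ∀ x ∈ openCube d, |w x| ≤ |Cw| := fun x hx => (hCw x hx).trans (le_abs_self _)
  have hbf : ∀ x ∈ openCube d, |f x| ≤ |Cf| := fun x hx => (hCf x hx).trans (le_abs_self _)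
  have hbg : ∀ x ∈ frontier (openCube d), |g x| ≤ |Cg| :=
    fun x hx => (hCg x hx).trans (le_abs_self _)
  have hbuW : ∀ x ∈ W, |u x| ≤ |Cu| := fun x hx => (hCu x hx.1).trans (le_abs_self _)
  have hbvW : ∀ x ∈ W, |ustar x| ≤ |Cv| := fun x hx => (hCv x hx.2).trans (le_abs_self _)
  have hbeW : ∀ x ∈ W, |e x| ≤ |Cu| + |Cv| := by
    intro x hx
    rw [heapp]
    calc |u x - ustar x| ≤ |u x| + |ustar x| := abs_sub _ _
      _ ≤ |Cu| + |Cv| := add_le_add (hbuW x hx) (hbvW x hx)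
  have hbguW : ∀ x ∈ W, ‖gradient u x‖ ≤ |Cu'| :=
    fun x hx => (hCu' x hx.1).trans (le_abs_self _)
  have hbgvW : ∀ x ∈ W, ‖gradient ustar x‖ ≤ |Cv'| :=
    fun x hx => (hCv' x hx.2).trans (le_abs_self _)
  have hbgeW : ∀ x ∈ W, ‖gradient e x‖ ≤ |Cu'| + |Cv'| := by
    intro x hx
    rw [hgrad_e x hx]
    calc ‖gradient u x - gradient ustar x‖ ≤ ‖gradient u x‖ + ‖gradient ustar x‖ :=
          norm_sub_le _ _
      _ ≤ |Cu'| + |Cv'| := add_le_add (hbguW x hx) (hbgvW x hx)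
  have hniceE : IsNice d e :=
    ⟨W, hWo, hWc, he1, ⟨|Cu| + |Cv|, hbeW⟩, ⟨|Cu'| + |Cv'|, hbgeW⟩⟩
  -- continuity on the open cube
  have hcu : ContinuousOn u (openCube d) := (hu1.continuousOn).mono hΩU
  have hcv : ContinuousOn ustar (openCube d) := (hv1.continuousOn).mono hΩV
  have hce : ContinuousOn e (openCube d) := (he1.continuousOn).mono hΩW
  have hcgu : ContinuousOn (gradient u) (openCube d) := (gradient_continuousOn hUo hu1).mono hΩU
  have hcgv : ContinuousOn (gradient ustar) (openCube d) :=
    (gradient_continuousOn hVo hv1).mono hΩV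
  have hcge : ContinuousOn (gradient e) (openCube d) := (gradient_continuousOn hWo he1).mono hΩW
  -- a.e. strong measurability on the cube
  have asmu : AEStronglyMeasurable u (volume.restrict (openCube d)) :=
    hcu.aestronglyMeasurable hΩm
  have asmv : AEStronglyMeasurable ustar (volume.restrict (openCube d)) :=
    hcv.aestronglyMeasurable hΩm
  have asme : AEStronglyMeasurable e (volume.restrict (openCube d)) :=
    hce.aestronglyMeasurable hΩm
  have asmgu : AEStronglyMeasurable (fun x => ‖gradient u x‖^2) (volume.restrict (openCube d)) :=
    ((hcgu.norm).pow 2).aestronglyMeasurable hΩm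
  have asmgv : AEStronglyMeasurable (fun x => ‖gradient ustar x‖^2)
      (volume.restrict (openCube d)) :=
    ((hcgv.norm).pow 2).aestronglyMeasurable hΩm
  have asmge : AEStronglyMeasurable (fun x => ‖gradient e x‖^2) (volume.restrict (openCube d)) :=
    ((hcge.norm).pow 2).aestronglyMeasurable hΩm
  have asminner : AEStronglyMeasurable
      (fun x => (inner ℝ (gradient ustar x) (gradient e x) : ℝ)) (volume.restrict (openCube d)) :=
    (hcgv.inner hcge).aestronglyMeasurable hΩm
  have asmw : AEStronglyMeasurable w (volume.restrict (openCube d)) := hw.aestronglyMeasurable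
  have asmf : AEStronglyMeasurable f (volume.restrict (openCube d)) := hf.aestronglyMeasurable
  -- integrability of all relevant products on the cube
  have i_gv : IntegrableOn (fun x => ‖gradient ustar x‖^2) (openCube d) :=
    integrableOn_cube asmgv (C := |Cv'|^2) (fun x hx => by
      rw [abs_of_nonneg (by positivity)]
      exact pow_le_pow_left₀ (norm_nonneg _) (hbgvW x (hΩW hx)) 2)
  have i_ge : IntegrableOn (fun x => ‖gradient e x‖^2) (openCube d) :=
    integrableOn_cube asmge (C := (|Cu'| + |Cv'|)^2) (fun x hx => by
      rw [abs_of_nonneg (by positivity)]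
      exact pow_le_pow_left₀ (norm_nonneg _) (hbgeW x (hΩW hx)) 2)
  have i_inner : IntegrableOn
      (fun x => (inner ℝ (gradient ustar x) (gradient e x) : ℝ)) (openCube d) :=
    integrableOn_cube asminner (C := |Cv'| * (|Cu'| + |Cv'|)) (fun x hx => by
      calc |(inner ℝ (gradient ustar x) (gradient e x) : ℝ)|
          ≤ ‖gradient ustar x‖ * ‖gradient e x‖ := abs_real_inner_le_norm _ _
        _ ≤ |Cv'| * (|Cu'| + |Cv'|) :=
            mul_le_mul (hbgvW x (hΩW hx)) (hbgeW x (hΩW hx)) (norm_nonneg _) (abs_nonneg _))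
  have i_e2 : IntegrableOn (fun x => e x ^ 2) (openCube d) := by
    refine integrableOn_cube ?_ (C := (|Cu| + |Cv|)^2) (fun x hx => by
      rw [abs_pow]
      exact pow_le_pow_left₀ (abs_nonneg _) (hbeW x (hΩW hx)) 2)
    have := asme.mul asme
    simpa [pow_two, Pi.mul_def] using this
  have i_wv2 : IntegrableOn (fun x => w x * ustar x ^ 2) (openCube d) := by
    refine integrableOn_cube ?_ (C := |Cw| * |Cv|^2) (fun x hx => by
      rw [abs_mul, abs_pow]
      exact mul_le_mul (hbw x hx) (pow_le_pow_left₀ (abs_nonneg _) (hbvW x (hΩW hx)) 2)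
        (by positivity) (abs_nonneg _))
    have := asmw.mul (asmv.mul asmv)
    simpa [pow_two, mul_assoc, Pi.mul_def] using this
  have i_we2 : IntegrableOn (fun x => w x * e x ^ 2) (openCube d) := by
    refine integrableOn_cube ?_ (C := |Cw| * (|Cu| + |Cv|)^2) (fun x hx => by
      rw [abs_mul, abs_pow]
      exact mul_le_mul (hbw x hx) (pow_le_pow_left₀ (abs_nonneg _) (hbeW x (hΩW hx)) 2)
        (by positivity) (abs_nonneg _))
    have := asmw.mul (asme.mul asme)
    simpa [pow_two, mul_assoc, Pi.mul_def] using this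
  have i_wve : IntegrableOn (fun x => w x * ustar x * e x) (openCube d) :=
    integrableOn_cube ((asmw.mul asmv).mul asme) (C := |Cw| * |Cv| * (|Cu| + |Cv|))
      (fun x hx => by
        rw [abs_mul, abs_mul]
        exact mul_le_mul (mul_le_mul (hbw x hx) (hbvW x (hΩW hx)) (abs_nonneg _)
          (abs_nonneg _)) (hbeW x (hΩW hx)) (abs_nonneg _) (by positivity))
  have i_fv : IntegrableOn (fun x => f x * ustar x) (openCube d) :=
    integrableOn_cube (asmf.mul asmv) (C := |Cf| * |Cv|) (fun x hx => by
      rw [abs_mul]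
      exact mul_le_mul (hbf x hx) (hbvW x (hΩW hx)) (abs_nonneg _) (abs_nonneg _))
  have i_fe : IntegrableOn (fun x => f x * e x) (openCube d) :=
    integrableOn_cube (asmf.mul asme) (C := |Cf| * (|Cu| + |Cv|)) (fun x hx => by
      rw [abs_mul]
      exact mul_le_mul (hbf x hx) (hbeW x (hΩW hx)) (abs_nonneg _) (abs_nonneg _))
  -- integrability on the frontier
  have hcvF : ContinuousOn ustar (frontier (openCube d)) := (hv1.continuousOn).mono hFV
  have hceF : ContinuousOn e (frontier (openCube d)) := (he1.continuousOn).mono hFW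
  have asmgvF : AEStronglyMeasurable (fun y => g y * ustar y)
      ((μH[(d:ℝ)-1]).restrict (frontier (openCube d))) :=
    hg.aestronglyMeasurable.mul (hcvF.aestronglyMeasurable hFm)
  have asmgeF : AEStronglyMeasurable (fun y => g y * e y)
      ((μH[(d:ℝ)-1]).restrict (frontier (openCube d))) :=
    hg.aestronglyMeasurable.mul (hceF.aestronglyMeasurable hFm)
  have j_gv : IntegrableOn (fun y => g y * ustar y) (frontier (openCube d)) (μH[(d:ℝ)-1]) :=
    integrableOn_frontier hd1 asmgvF (C := |Cg| * |Cv|) (fun x hx => by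
      rw [abs_mul]
      exact mul_le_mul (hbg x hx) ((hCv x (hFV hx)).trans (le_abs_self _))
        (abs_nonneg _) (abs_nonneg _))
  have j_ge : IntegrableOn (fun y => g y * e y) (frontier (openCube d)) (μH[(d:ℝ)-1]) :=
    integrableOn_frontier hd1 asmgeF (C := |Cg| * (|Cu| + |Cv|)) (fun x hx => by
      rw [abs_mul]
      exact mul_le_mul (hbg x hx) (hbeW x (hFW hx)) (abs_nonneg _) (abs_nonneg _))
  -- Step A : expansion of the gradient term
  have hA : (∫ x in openCube d, ‖gradient u x‖^2) =
      (∫ x in openCube d, ‖gradient ustar x‖^2) +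
      2 * (∫ x in openCube d, (inner ℝ (gradient ustar x) (gradient e x) : ℝ)) +
      (∫ x in openCube d, ‖gradient e x‖^2) := by
    have hsum : Set.EqOn (fun x => ‖gradient u x‖^2)
        (fun x => ‖gradient ustar x‖^2 +
          2 * (inner ℝ (gradient ustar x) (gradient e x) : ℝ) + ‖gradient e x‖^2)
        (openCube d) := by
      intro x hx
      have hgx : gradient u x = gradient ustar x + gradient e x := by
        rw [hgrad_e x (hΩW hx)]; abel
      simp only
      rw [hgx, norm_add_sq_real]
    have h2 : Integrable (fun x => ‖gradient ustar x‖^2 +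
        2 * (inner ℝ (gradient ustar x) (gradient e x) : ℝ)) (volume.restrict (openCube d)) :=
      i_gv.add (i_inner.const_mul 2)
    rw [setIntegral_congr_fun hΩm hsum, integral_add h2 i_ge,
      integral_add i_gv (i_inner.const_mul 2), integral_const_mul]
  -- Step B : expansion of the potential term
  have hB : (∫ x in openCube d, w x * (u x)^2) =
      (∫ x in openCube d, w x * (ustar x)^2) +
      2 * (∫ x in openCube d, w x * ustar x * e x) +
      (∫ x in openCube d, w x * e x ^ 2) := by
    have hsum : Set.EqOn (fun x => w x * (u x)^2)
        (fun x => w x * (ustar x)^2 + 2 * (w x * ustar x * e x) + w x * e x ^ 2)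
        (openCube d) := by
      intro x _
      simp only
      have hux : u x = ustar x + e x := by rw [heapp]; ring
      rw [hux]; ring
    have h2 : Integrable (fun x => w x * (ustar x)^2 +
        2 * (w x * ustar x * e x)) (volume.restrict (openCube d)) :=
      i_wv2.add (i_wve.const_mul 2)
    rw [setIntegral_congr_fun hΩm hsum, integral_add h2 i_we2,
      integral_add i_wv2 (i_wve.const_mul 2), integral_const_mul]
  -- Step C : expansion of the source term
  have hC : (∫ x in openCube d, f x * u x) =
      (∫ x in openCube d, f x * ustar x) + (∫ x in openCube d, f x * e x) := by
    have hsum : Set.EqOn (fun x => f x * u x)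
        (fun x => f x * ustar x + f x * e x) (openCube d) := by
      intro x _
      simp only
      have hux : u x = ustar x + e x := by rw [heapp]; ring
      rw [hux]; ring
    rw [setIntegral_congr_fun hΩm hsum, integral_add i_fv i_fe]
  -- Step D : expansion of the boundary term
  have hD : (∫ y in frontier (openCube d), g y * u y ∂(μH[(d:ℝ) - 1])) =
      (∫ y in frontier (openCube d), g y * ustar y ∂(μH[(d:ℝ) - 1])) +
      (∫ y in frontier (openCube d), g y * e y ∂(μH[(d:ℝ) - 1])) := by
    have hsum : Set.EqOn (fun y => g y * u y)
        (fun y => g y * ustar y + g y * e y) (frontier (openCube d)) := by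
      intro x _
      simp only
      have hux : u x = ustar x + e x := by rw [heapp]; ring
      rw [hux]; ring
    rw [setIntegral_congr_fun hFm hsum, integral_add j_gv j_ge]
  have hE := hweak e hniceE
  have hkey : ritzEnergy d w f g u - ritzEnergy d w f g ustar =
      (1/2) * (∫ x in openCube d, ‖gradient e x‖^2) +
      (1/2) * (∫ x in openCube d, w x * e x ^ 2) := by
    simp only [ritzEnergy]
    rw [hA, hB, hC, hD]
    linarith [hE]
  -- nonnegativity
  have hI0 : 0 ≤ ∫ x in openCube d, e x ^ 2 :=
    setIntegral_nonneg hΩm (fun x _ => sq_nonneg _)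
  have hGe : 0 ≤ ∫ x in openCube d, ‖gradient e x‖^2 :=
    setIntegral_nonneg hΩm (fun x _ => by positivity)
  -- lower bound for the potential term
  have hWe_lower : c₁ * (∫ x in openCube d, e x ^ 2) ≤ ∫ x in openCube d, w x * e x ^ 2 := by
    rw [← integral_const_mul]
    refine integral_mono_ae (i_e2.const_mul c₁) i_we2 ?_
    filter_upwards [hwlb] with x hx
    exact mul_le_mul_of_nonneg_right hx (sq_nonneg _)
  -- upper bound for the potential term
  set M := (eLpNorm w ⊤ (volume.restrict (openCube d))).toReal with hM
  have hwle : ∀ᵐ x ∂(volume.restrict (openCube d)), w x ≤ M := by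
    filter_upwards [ae_le_eLpNormEssSup (f := w) (μ := volume.restrict (openCube d))] with x hx
    have h1 : (‖w x‖₊ : ℝ≥0∞) ≤ eLpNorm w ⊤ (volume.restrict (openCube d)) := by
      rw [eLpNorm_exponent_top]; exact hx
    have h2 : ‖w x‖ ≤ M := by
      have := ENNReal.toReal_mono (ne_of_lt hwtop) h1
      simpa [hM, eLpNorm_exponent_top] using this
    calc w x ≤ |w x| := le_abs_self _
      _ = ‖w x‖ := (Real.norm_eq_abs _).symm
      _ ≤ M := h2
  have hWe_upper : (∫ x in openCube d, w x * e x ^ 2) ≤ M * ∫ x in openCube d, e x ^ 2 := by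
    rw [← integral_const_mul]
    refine integral_mono_ae i_we2 (i_e2.const_mul M) ?_
    filter_upwards [hwle] with x hx
    exact mul_le_mul_of_nonneg_right hx (sq_nonneg _)
  -- finish
  have hH1 : H1normSq d e =
      (∫ x in openCube d, e x ^ 2) + ∫ x in openCube d, ‖gradient e x‖^2 := rfl
  rw [hkey, hH1]
  constructor
  · have hm1 : min c₁ 1 ≤ c₁ := min_le_left _ _
    have hm2 : min c₁ 1 ≤ 1 := min_le_right _ _
    nlinarith [mul_nonneg (sub_nonneg.mpr hm1) hI0, mul_nonneg (sub_nonneg.mpr hm2) hGe]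
  · have hm1 : M ≤ max M 1 := le_max_left _ _
    have hm2 : (1:ℝ) ≤ max M 1 := le_max_right _ _
    nlinarith [mul_nonneg (sub_nonneg.mpr hm1) hI0, mul_nonneg (sub_nonneg.mpr hm2) hGe]
end
end

section
/- Let X be a set, let x₁,…,x_n ∈ X, let F be a nonempty countable class of functions X → ℝ with sup_{f∈F} max_{1≤i≤n} |f(xᵢ)| < ∞, and let Ψ : X × ℝ → ℝ satisfy: for every x, the map y ↦ Ψ(x,y) is L-Lipschitz and Ψ(x,0) = 0. Let σ₁,…,σ_n be i.i.d. Rademacher variables (uniform on {−1,1}). Then E_σ[ sup_{f∈F} (1/n)|Σ_{i=1}^n σᵢ Ψ(xᵢ, f(xᵢ))| ] ≤ 2L · E_σ[ sup_{f∈F} (1/n)|Σ_{i=1}^n σᵢ f(xᵢ)| ]. -/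
open Finset Set

namespace RadConAux

/-- sign of a Boolean pattern -/
def eps {n : ℕ} (s : Fin n → Bool) (i : Fin n) : ℝ := if s i then 1 else -1

/-- mixed contraction: coordinates in `K` are replaced by `L * ·`. -/
def mix {n : ℕ} (φ : Fin n → ℝ → ℝ) (L : ℝ) (K : Finset (Fin n)) (i : Fin n) (t : ℝ) : ℝ :=
  if i ∈ K then L * t else φ i t

lemma bddAbove_image {α : Type*} {A : Set α} (g : α → ℝ) (M : ℝ) (h : ∀ a ∈ A, g a ≤ M) :
    BddAbove (g '' A) := ⟨M, by rintro y ⟨a, ha, rfl⟩; exact h a ha⟩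

lemma pp {s t U V : ℝ} (hsum : s + t ≤ U + V) (hs : s ≤ max U V) (ht : t ≤ max U V)
    (hU : 0 ≤ U) (hV : 0 ≤ V) : max s 0 + max t 0 ≤ U + V := by
  have hUV : max U V ≤ U + V := max_le (by linarith) (by linarith)
  rcases le_total s 0 with h1 | h1 <;> rcases le_total t 0 with h2 | h2
  · rw [max_eq_right h1, max_eq_right h2]; linarith
  · rw [max_eq_right h1, max_eq_left h2]; linarith
  · rw [max_eq_left h1, max_eq_right h2]; linarith
  · rw [max_eq_left h1, max_eq_left h2]; linarith

/-- Core single-coordinate contraction step (conditional on the other signs). -/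
lemma star {α : Type*} {A : Set α} (hA : A.Nonempty) (T c : α → ℝ) (φ : ℝ → ℝ)
    (L σ : ℝ) (hL : 0 ≤ L) (hσ : |σ| = 1)
    (hLip : ∀ y₁ y₂, |φ y₁ - φ y₂| ≤ L * |y₁ - y₂|) (hz : φ 0 = 0)
    (B3 : BddAbove ((fun a => max (σ * (L * c a) + T a) 0) '' A))
    (B4 : BddAbove ((fun a => max (-σ * (L * c a) + T a) 0) '' A)) :
    sSup ((fun a => max (σ * φ (c a) + T a) 0) '' A)
      + sSup ((fun a => max (-σ * φ (c a) + T a) 0) '' A)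
    ≤ sSup ((fun a => max (σ * (L * c a) + T a) 0) '' A)
      + sSup ((fun a => max (-σ * (L * c a) + T a) 0) '' A) := by
  obtain ⟨a₀, ha₀⟩ := hA
  set U := sSup ((fun a => max (σ * (L * c a) + T a) 0) '' A) with hUdef
  set V := sSup ((fun a => max (-σ * (L * c a) + T a) 0) '' A) with hVdef
  have hbU : ∀ a ∈ A, σ * (L * c a) + T a ≤ U :=
    fun a ha => le_trans (le_max_left _ 0) (le_csSup B3 ⟨a, ha, rfl⟩)
  have hbV : ∀ a ∈ A, -σ * (L * c a) + T a ≤ V :=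
    fun a ha => le_trans (le_max_left _ 0) (le_csSup B4 ⟨a, ha, rfl⟩)
  have hU0 : 0 ≤ U := le_trans (le_max_right _ 0) (le_csSup B3 ⟨a₀, ha₀, rfl⟩)
  have hV0 : 0 ≤ V := le_trans (le_max_right _ 0) (le_csSup B4 ⟨a₀, ha₀, rfl⟩)
  have habsφ : ∀ y, |φ y| ≤ L * |y| := fun y => by simpa [hz] using hLip y 0
  have hσφ : ∀ τ y, |τ| = 1 → τ * φ y ≤ L * |y| := by
    intro τ y hτ
    calc τ * φ y ≤ |τ * φ y| := le_abs_self _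
      _ = |φ y| := by rw [abs_mul, hτ, one_mul]
      _ ≤ L * |y| := habsφ y
  have habs2 : ∀ τ : ℝ, |τ| = 1 → ∀ y : ℝ, |τ * (L * y)| = L * |y| := by
    intro τ hτ y
    rw [abs_mul, hτ, one_mul, abs_mul, abs_of_nonneg hL]
  have hnσ : |(-σ)| = 1 := by rw [abs_neg, hσ]
  have hUB : ∀ a ∈ A, ∀ τ : ℝ, |τ| = 1 →
      (∀ b ∈ A, τ * (L * c b) + T b ≤ max U V) →
      (∀ b ∈ A, -τ * (L * c b) + T b ≤ max U V) →
      τ * φ (c a) + T a ≤ max U V := by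
    intro a ha τ hτ h₁ h₂
    have h3 : τ * φ (c a) ≤ L * |c a| := hσφ τ _ hτ
    have h4 : |τ * (L * c a)| = L * |c a| := habs2 τ hτ (c a)
    have hnm : -τ * (L * c a) = -(τ * (L * c a)) := by ring
    rcases le_total 0 (τ * (L * c a)) with h | h
    · have h5 : L * |c a| = τ * (L * c a) := by rw [← h4, abs_of_nonneg h]
      linarith [h₁ a ha]
    · have h5 : L * |c a| = -(τ * (L * c a)) := by rw [← h4, abs_of_nonpos h]
      linarith [h₂ a ha]
  have hmain : ∀ a ∈ A, ∀ b ∈ A,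
      max (σ * φ (c a) + T a) 0 + max (-σ * φ (c b) + T b) 0 ≤ U + V := by
    intro a ha b hb
    have hsum : (σ * φ (c a) + T a) + (-σ * φ (c b) + T b) ≤ U + V := by
      have h1 : σ * φ (c a) + -σ * φ (c b) = σ * (φ (c a) - φ (c b)) := by ring
      have h2 : σ * (φ (c a) - φ (c b)) ≤ L * |c a - c b| := by
        calc σ * (φ (c a) - φ (c b)) ≤ |σ * (φ (c a) - φ (c b))| := le_abs_self _
          _ = |φ (c a) - φ (c b)| := by rw [abs_mul, hσ, one_mul]
          _ ≤ L * |c a - c b| := hLip _ _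
      have h4 : |σ * (L * c a) - σ * (L * c b)| = L * |c a - c b| := by
        rw [show σ * (L * c a) - σ * (L * c b) = σ * (L * (c a - c b)) by ring, abs_mul, hσ,
          one_mul, abs_mul, abs_of_nonneg hL]
      rcases le_total (σ * (L * c b)) (σ * (L * c a)) with h | h
      · have h5 : L * |c a - c b| = σ * (L * c a) - σ * (L * c b) := by
          rw [← h4, abs_of_nonneg (by linarith)]
        have h6 := hbU a ha
        have h7 := hbV b hb
        have h8 : -σ * (L * c b) = -(σ * (L * c b)) := by ring
        linarith
      · have h5 : L * |c a - c b| = -(σ * (L * c a) - σ * (L * c b)) := by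
          rw [← h4, abs_of_nonpos (by linarith)]
        have h6 := hbV a ha
        have h7 := hbU b hb
        have h8 : -σ * (L * c a) = -(σ * (L * c a)) := by ring
        linarith
    have hsa : σ * φ (c a) + T a ≤ max U V :=
      hUB a ha σ hσ (fun b hb => (hbU b hb).trans (le_max_left U V))
        (fun b hb => (hbV b hb).trans (le_max_right U V))
    have hsb : -σ * φ (c b) + T b ≤ max U V := by
      refine hUB b hb (-σ) hnσ (fun b hb => (hbV b hb).trans (le_max_right U V))
        (fun b hb => ?_)
      have h9 : -(-σ) * (L * c b) = σ * (L * c b) := by ring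
      rw [h9]
      exact (hbU b hb).trans (le_max_left U V)
    exact pp hsum hsa hsb hU0 hV0
  have h9 : sSup ((fun a => max (σ * φ (c a) + T a) 0) '' A)
      ≤ U + V - sSup ((fun a => max (-σ * φ (c a) + T a) 0) '' A) := by
    refine csSup_le (Set.Nonempty.image _ ⟨a₀, ha₀⟩) ?_
    rintro y ⟨a, ha, rfl⟩
    dsimp only
    have h10 : sSup ((fun b => max (-σ * φ (c b) + T b) 0) '' A)
        ≤ U + V - max (σ * φ (c a) + T a) 0 := by
      refine csSup_le (Set.Nonempty.image _ ⟨a₀, ha₀⟩) ?_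
      rintro z ⟨b, hb, rfl⟩
      dsimp only
      have := hmain a ha b hb
      linarith
    linarith
  linarith

/-- Abstract key lemma: the unnormalized contraction inequality. -/
lemma key {X : Type*} (n : ℕ) (x : Fin n → X) (F : Set (X → ℝ)) (hFne : F.Nonempty)
    (C : ℝ) (hC : ∀ f ∈ F, ∀ i, |f (x i)| ≤ C)
    (φ : Fin n → ℝ → ℝ) (L : ℝ) (hL : 0 ≤ L)
    (hLip : ∀ i y₁ y₂, |φ i y₁ - φ i y₂| ≤ L * |y₁ - y₂|)
    (hzero : ∀ i, φ i 0 = 0) :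
    (∑ s : Fin n → Bool, sSup ((fun f => |∑ i, eps s i * φ i (f (x i))|) '' F))
      ≤ 2 * L * ∑ s : Fin n → Bool, sSup ((fun f => |∑ i, eps s i * f (x i)|) '' F) := by
  classical
  have habs1 : ∀ (s : Fin n → Bool) (i : Fin n), |eps s i| = 1 := by
    intro s i; unfold eps; rcases Bool.eq_false_or_eq_true (s i) with h | h <;> simp [h]
  have hφb : ∀ (i : Fin n) (t : ℝ), |φ i t| ≤ L * |t| := fun i t => by
    simpa [hzero i] using hLip i t 0
  -- generic bound for mixed sums
  have hbound : ∀ (g : (X → ℝ) → Fin n → ℝ) (M : ℝ), (∀ f ∈ F, ∀ i, |g f i| ≤ M) →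
      ∀ (s : Fin n → Bool) (f : X → ℝ), f ∈ F →
        |∑ i, eps s i * g f i| ≤ ∑ _i : Fin n, M := by
    intro g M hg s f hf
    calc |∑ i, eps s i * g f i| ≤ ∑ i, |eps s i * g f i| := Finset.abs_sum_le_sum_abs _ _
      _ ≤ ∑ _i : Fin n, M := Finset.sum_le_sum fun i _ => by
          rw [abs_mul, habs1 s i, one_mul]; exact hg f hf i
  have hmixb : ∀ (K : Finset (Fin n)), ∀ f ∈ F, ∀ i, |mix φ L K i (f (x i))| ≤ L * C := by
    intro K f hf i
    unfold mix
    split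
    · rw [abs_mul, abs_of_nonneg hL]
      exact mul_le_mul_of_nonneg_left (hC f hf i) hL
    · exact (hφb i _).trans (mul_le_mul_of_nonneg_left (hC f hf i) hL)
  -- BddAbove for all relevant sets
  have hBposmix : ∀ (K : Finset (Fin n)) (s : Fin n → Bool),
      BddAbove ((fun f => max (∑ i, eps s i * mix φ L K i (f (x i))) 0) '' F) := by
    intro K s
    refine bddAbove_image _ (max (∑ _i : Fin n, L * C) 0) fun f hf => ?_
    exact max_le_max (le_trans (le_abs_self _)
      (hbound (fun f i => mix φ L K i (f (x i))) (L * C) (hmixb K) s f hf)) le_rfl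
  have hBabsφ : ∀ s : Fin n → Bool,
      BddAbove ((fun f => |∑ i, eps s i * φ i (f (x i))|) '' F) := by
    intro s
    refine bddAbove_image _ (∑ _i : Fin n, L * C) fun f hf => ?_
    have : ∀ f ∈ F, ∀ i, |φ i (f (x i))| ≤ L * C := fun f hf i =>
      (hφb i _).trans (mul_le_mul_of_nonneg_left (hC f hf i) hL)
    exact hbound (fun f i => φ i (f (x i))) (L * C) this s f hf
  have hBabsid : ∀ s : Fin n → Bool,
      BddAbove ((fun f => |∑ i, eps s i * f (x i)|) '' F) := by
    intro s
    refine bddAbove_image _ (∑ _i : Fin n, C) fun f hf => ?_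
    exact hbound (fun f i => f (x i)) C (fun f hf i => hC f hf i) s f hf
  have hmixempty : ∀ i t, mix φ L (∅ : Finset (Fin n)) i t = φ i t := by
    intro i t; simp [mix]
  -- Step 1 : absolute value ≤ 2 × positive part
  have step1 : ∑ s : Fin n → Bool, sSup ((fun f => |∑ i, eps s i * φ i (f (x i))|) '' F)
      ≤ 2 * ∑ s : Fin n → Bool,
          sSup ((fun f => max (∑ i, eps s i * φ i (f (x i))) 0) '' F) := by
    have hBpos : ∀ s : Fin n → Bool,
        BddAbove ((fun f => max (∑ i, eps s i * φ i (f (x i))) 0) '' F) := by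
      intro s
      have := hBposmix ∅ s
      simpa only [hmixempty] using this
    have hneg : ∀ s : Fin n → Bool,
        sSup ((fun f => |∑ i, eps s i * φ i (f (x i))|) '' F)
          ≤ sSup ((fun f => max (∑ i, eps s i * φ i (f (x i))) 0) '' F)
            + sSup ((fun f => max (∑ i, eps (fun j => !(s j)) i * φ i (f (x i))) 0) '' F) := by
      intro s
      refine csSup_le (hFne.image _) ?_
      rintro y ⟨f, hf, rfl⟩
      dsimp only
      have h1 : ∑ i, eps (fun j => !(s j)) i * φ i (f (x i))
          = -∑ i, eps s i * φ i (f (x i)) := by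
        rw [← Finset.sum_neg_distrib]
        refine Finset.sum_congr rfl fun i _ => ?_
        have : eps (fun j => !(s j)) i = -eps s i := by
          unfold eps; rcases Bool.eq_false_or_eq_true (s i) with h | h <;> simp [h]
        rw [this]; ring
      have h2 : |∑ i, eps s i * φ i (f (x i))|
          = max (∑ i, eps s i * φ i (f (x i))) 0
            + max (-∑ i, eps s i * φ i (f (x i))) 0 := by
        rcases le_total 0 (∑ i, eps s i * φ i (f (x i))) with h | h
        · rw [abs_of_nonneg h, max_eq_left h, max_eq_right (by linarith), add_zero]
        · rw [abs_of_nonpos h, max_eq_right h, max_eq_left (by linarith), zero_add]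
      rw [h2]
      refine add_le_add (le_csSup (hBpos s) ⟨f, hf, rfl⟩) ?_
      have h3 : max (-∑ i, eps s i * φ i (f (x i))) 0
          = max (∑ i, eps (fun j => !(s j)) i * φ i (f (x i))) 0 := by rw [h1]
      rw [h3]
      exact le_csSup (hBpos _) ⟨f, hf, rfl⟩
    have hre : ∑ s : Fin n → Bool,
        sSup ((fun f => max (∑ i, eps (fun j => !(s j)) i * φ i (f (x i))) 0) '' F)
        = ∑ s : Fin n → Bool,
            sSup ((fun f => max (∑ i, eps s i * φ i (f (x i))) 0) '' F) := by
      exact Fintype.sum_bijective (fun s : Fin n → Bool => fun j => !(s j))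
        (Function.Involutive.bijective (fun s => by funext j; simp)) _ _ (fun s => rfl)
    calc ∑ s : Fin n → Bool, sSup ((fun f => |∑ i, eps s i * φ i (f (x i))|) '' F)
        ≤ ∑ s : Fin n → Bool,
            (sSup ((fun f => max (∑ i, eps s i * φ i (f (x i))) 0) '' F)
              + sSup ((fun f => max (∑ i, eps (fun j => !(s j)) i * φ i (f (x i))) 0) '' F)) :=
          Finset.sum_le_sum fun s _ => hneg s
      _ = ∑ s : Fin n → Bool, sSup ((fun f => max (∑ i, eps s i * φ i (f (x i))) 0) '' F)
          + ∑ s : Fin n → Bool,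
              sSup ((fun f => max (∑ i, eps (fun j => !(s j)) i * φ i (f (x i))) 0) '' F) :=
          Finset.sum_add_distrib
      _ = 2 * ∑ s : Fin n → Bool,
            sSup ((fun f => max (∑ i, eps s i * φ i (f (x i))) 0) '' F) := by
          rw [hre]; ring
  -- Step 2 : coordinatewise replacement (the contraction induction)
  have hstep : ∀ (K : Finset (Fin n)) (k : Fin n), k ∉ K →
      ∑ s : Fin n → Bool, sSup ((fun f => max (∑ i, eps s i * mix φ L K i (f (x i))) 0) '' F)
        ≤ ∑ s : Fin n → Bool,
            sSup ((fun f => max (∑ i, eps s i * mix φ L (insert k K) i (f (x i))) 0) '' F) := by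
    intro K k hk
    set e : (Fin n → Bool) → (Fin n → Bool) := fun s => Function.update s k (!(s k)) with he_def
    have he : Function.Involutive e := by
      intro s; funext j
      rcases eq_or_ne j k with rfl | h
      · simp [e, Function.update_self]
      · simp [e, Function.update_of_ne h]
    have hpt : ∀ s : Fin n → Bool,
        sSup ((fun f => max (∑ i, eps s i * mix φ L K i (f (x i))) 0) '' F)
          + sSup ((fun f => max (∑ i, eps (e s) i * mix φ L K i (f (x i))) 0) '' F)
        ≤ sSup ((fun f => max (∑ i, eps s i * mix φ L (insert k K) i (f (x i))) 0) '' F)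
          + sSup ((fun f => max (∑ i, eps (e s) i * mix φ L (insert k K) i (f (x i))) 0) '' F) := by
      intro s
      set T : (X → ℝ) → ℝ := fun f => ∑ i ∈ Finset.univ.erase k, eps s i * mix φ L K i (f (x i))
        with hT
      have hepse : ∀ i, i ≠ k → eps (e s) i = eps s i := by
        intro i hi; unfold eps; rw [he_def]; simp [Function.update_of_ne hi]
      have hepsk : eps (e s) k = -eps s k := by
        unfold eps; rw [he_def]; simp only [Function.update_self]
        rcases Bool.eq_false_or_eq_true (s k) with h | h <;> simp [h]
      have hσ : |eps s k| = 1 := habs1 s k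
      have E1 : ∀ f : X → ℝ, ∑ i, eps s i * mix φ L K i (f (x i))
          = eps s k * φ k (f (x k)) + T f := by
        intro f
        rw [← Finset.add_sum_erase Finset.univ _ (Finset.mem_univ k)]
        congr 1
        simp [mix, hk]
      have E2 : ∀ f : X → ℝ, ∑ i, eps (e s) i * mix φ L K i (f (x i))
          = -eps s k * φ k (f (x k)) + T f := by
        intro f
        rw [← Finset.add_sum_erase Finset.univ _ (Finset.mem_univ k)]
        congr 1
        · rw [hepsk]; simp [mix, hk]
        · exact Finset.sum_congr rfl fun i hi => by
            rw [hepse i (Finset.ne_of_mem_erase hi)]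
      have E3 : ∀ f : X → ℝ, ∑ i, eps s i * mix φ L (insert k K) i (f (x i))
          = eps s k * (L * f (x k)) + T f := by
        intro f
        rw [← Finset.add_sum_erase Finset.univ _ (Finset.mem_univ k)]
        congr 1
        · simp [mix]
        · refine Finset.sum_congr rfl fun i hi => ?_
          have hik : i ≠ k := Finset.ne_of_mem_erase hi
          simp [mix, Finset.mem_insert, hik]
      have E4 : ∀ f : X → ℝ, ∑ i, eps (e s) i * mix φ L (insert k K) i (f (x i))
          = -eps s k * (L * f (x k)) + T f := by
        intro f
        rw [← Finset.add_sum_erase Finset.univ _ (Finset.mem_univ k)]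
        congr 1
        · rw [hepsk]; simp [mix]
        · refine Finset.sum_congr rfl fun i hi => ?_
          have hik : i ≠ k := Finset.ne_of_mem_erase hi
          rw [hepse i hik]
          simp [mix, Finset.mem_insert, hik]
      have hrw1 : (fun f => max (∑ i, eps s i * mix φ L K i (f (x i))) 0)
          = fun f => max (eps s k * φ k (f (x k)) + T f) 0 := funext fun f => by rw [E1 f]
      have hrw2 : (fun f => max (∑ i, eps (e s) i * mix φ L K i (f (x i))) 0)
          = fun f => max (-eps s k * φ k (f (x k)) + T f) 0 := funext fun f => by rw [E2 f]
      have hrw3 : (fun f => max (∑ i, eps s i * mix φ L (insert k K) i (f (x i))) 0)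
          = fun f => max (eps s k * (L * f (x k)) + T f) 0 := funext fun f => by rw [E3 f]
      have hrw4 : (fun f => max (∑ i, eps (e s) i * mix φ L (insert k K) i (f (x i))) 0)
          = fun f => max (-eps s k * (L * f (x k)) + T f) 0 := funext fun f => by rw [E4 f]
      have B3 : BddAbove ((fun f => max (eps s k * (L * f (x k)) + T f) 0) '' F) := by
        rw [← hrw3]; exact hBposmix (insert k K) s
      have B4 : BddAbove ((fun f => max (-eps s k * (L * f (x k)) + T f) 0) '' F) := by
        rw [← hrw4]; exact hBposmix (insert k K) (e s)
      rw [hrw1, hrw2, hrw3, hrw4]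
      exact star hFne T (fun f => f (x k)) (φ k) L (eps s k) hL hσ (hLip k) (hzero k) B3 B4
    have hsum_e : ∀ g : (Fin n → Bool) → ℝ, ∑ s : Fin n → Bool, g (e s) = ∑ s : Fin n → Bool, g s :=
      fun g => Fintype.sum_bijective e he.bijective _ _ (fun s => rfl)
    have h2 : 2 * ∑ s : Fin n → Bool,
          sSup ((fun f => max (∑ i, eps s i * mix φ L K i (f (x i))) 0) '' F)
        ≤ 2 * ∑ s : Fin n → Bool,
            sSup ((fun f => max (∑ i, eps s i * mix φ L (insert k K) i (f (x i))) 0) '' F) := by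
      have ha := hsum_e (fun s =>
        sSup ((fun f => max (∑ i, eps s i * mix φ L K i (f (x i))) 0) '' F))
      have hb := hsum_e (fun s =>
        sSup ((fun f => max (∑ i, eps s i * mix φ L (insert k K) i (f (x i))) 0) '' F))
      have hc : ∑ s : Fin n → Bool,
            (sSup ((fun f => max (∑ i, eps s i * mix φ L K i (f (x i))) 0) '' F)
              + sSup ((fun f => max (∑ i, eps (e s) i * mix φ L K i (f (x i))) 0) '' F))
          ≤ ∑ s : Fin n → Bool,
            (sSup ((fun f => max (∑ i, eps s i * mix φ L (insert k K) i (f (x i))) 0) '' F)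
              + sSup ((fun f => max (∑ i, eps (e s) i * mix φ L (insert k K) i (f (x i))) 0) '' F)) :=
        Finset.sum_le_sum fun s _ => hpt s
      rw [Finset.sum_add_distrib, Finset.sum_add_distrib] at hc
      simp only [ha, hb] at hc
      linarith
    linarith
  have step2 : ∀ K : Finset (Fin n),
      ∑ s : Fin n → Bool, sSup ((fun f => max (∑ i, eps s i * φ i (f (x i))) 0) '' F)
        ≤ ∑ s : Fin n → Bool,
            sSup ((fun f => max (∑ i, eps s i * mix φ L K i (f (x i))) 0) '' F) := by
    intro K
    induction K using Finset.induction_on with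
    | empty => simp only [hmixempty]; exact le_refl _
    | insert _ _ hk ih => exact ih.trans (hstep _ _ hk)
  -- Step 3
  have step3 : ∑ s : Fin n → Bool,
        sSup ((fun f => max (∑ i, eps s i * mix φ L Finset.univ i (f (x i))) 0) '' F)
      ≤ L * ∑ s : Fin n → Bool, sSup ((fun f => |∑ i, eps s i * f (x i)|) '' F) := by
    rw [Finset.mul_sum]
    refine Finset.sum_le_sum fun s _ => ?_
    refine csSup_le (hFne.image _) ?_
    rintro y ⟨f, hf, rfl⟩
    dsimp only
    have h1 : ∑ i, eps s i * mix φ L Finset.univ i (f (x i))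
        = L * ∑ i, eps s i * f (x i) := by
      rw [Finset.mul_sum]
      refine Finset.sum_congr rfl fun i _ => ?_
      simp only [mix, Finset.mem_univ, if_true]; ring
    rw [h1]
    have h2 : |∑ i, eps s i * f (x i)| ≤ sSup ((fun f => |∑ i, eps s i * f (x i)|) '' F) :=
      le_csSup (hBabsid s) ⟨f, hf, rfl⟩
    have h0 : 0 ≤ sSup ((fun f => |∑ i, eps s i * f (x i)|) '' F) := (abs_nonneg _).trans h2
    refine max_le ?_ (mul_nonneg hL h0)
    exact mul_le_mul_of_nonneg_left ((le_abs_self _).trans h2) hL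
  have h2 := step2 Finset.univ
  nlinarith [step1, h2, step3]

end RadConAux

/-- **Rademacher contraction principle (Ledoux–Talagrand, Corollary 3.17; Lemma 3.6).**
If `Ψ(x,·)` is `L`-Lipschitz with `Ψ(x,0) = 0`, then the empirical Rademacher
complexity of `{z ↦ Ψ(z, f(z)) : f ∈ F}` is at most `2L` times that of `F`.
The expectation over the i.i.d. Rademacher signs `σ` (uniform on `{−1,1}ⁿ`) is
written as the average over all sign patterns `s : Fin n → Bool`. -/
theorem rademacher_contraction {X : Type*} (n : ℕ) (hn : 0 < n) (x : Fin n → X)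
    (F : Set (X → ℝ)) (hFc : F.Countable) (hFne : F.Nonempty)
    (C : ℝ) (hC : ∀ f ∈ F, ∀ i, |f (x i)| ≤ C)
    (Ψ : X → ℝ → ℝ) (L : ℝ) (hL : 0 ≤ L)
    (hLip : ∀ z y₁ y₂, |Ψ z y₁ - Ψ z y₂| ≤ L * |y₁ - y₂|)
    (hzero : ∀ z, Ψ z 0 = 0) :
    (1 / 2 ^ n : ℝ) * ∑ s : Fin n → Bool,
        sSup ((fun f : X → ℝ => (1 / n : ℝ) *
          |∑ i, (if s i then (1:ℝ) else -1) * Ψ (x i) (f (x i))|) '' F)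
      ≤ 2 * L * ((1 / 2 ^ n : ℝ) * ∑ s : Fin n → Bool,
        sSup ((fun f : X → ℝ => (1 / n : ℝ) *
          |∑ i, (if s i then (1:ℝ) else -1) * f (x i)|) '' F)) := by
  classical
  have hkey := RadConAux.key n x F hFne C hC (fun i => Ψ (x i)) L hL
    (fun i => hLip (x i)) (fun i => hzero (x i))
  simp only [RadConAux.eps] at hkey
  -- rescale each sSup by the nonnegative constant 1/n
  have hscale : ∀ (g : (X → ℝ) → ℝ) (M : ℝ), (∀ f ∈ F, g f ≤ M) →
      sSup ((fun f => (1 / n : ℝ) * g f) '' F) = (1 / n : ℝ) * sSup (g '' F) := by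
    intro g M hM
    have hmono : Monotone fun y : ℝ => (1 / n : ℝ) * y :=
      fun a b hab => mul_le_mul_of_nonneg_left hab (by positivity)
    have := hmono.map_csSup_of_continuousAt
      (continuousAt_const.mul continuousAt_id) (hFne.image g)
      ⟨M, by rintro y ⟨f, hf, rfl⟩; exact hM f hf⟩
    rw [Set.image_image] at this
    exact this.symm
  have habsif : ∀ (s : Fin n → Bool) (i : Fin n), |(if s i then (1:ℝ) else -1)| = 1 := by
    intro s i; rcases Bool.eq_false_or_eq_true (s i) with h | h <;> simp [h]
  have hb1 : ∀ (s : Fin n → Bool), ∀ f ∈ F,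
      |∑ i, (if s i then (1:ℝ) else -1) * Ψ (x i) (f (x i))| ≤ ∑ _i : Fin n, L * C := by
    intro s f hf
    calc |∑ i, (if s i then (1:ℝ) else -1) * Ψ (x i) (f (x i))|
        ≤ ∑ i, |(if s i then (1:ℝ) else -1) * Ψ (x i) (f (x i))| :=
          Finset.abs_sum_le_sum_abs _ _
      _ ≤ ∑ _i : Fin n, L * C := by
          refine Finset.sum_le_sum fun i _ => ?_
          rw [abs_mul, habsif s i, one_mul]
          have h1 : |Ψ (x i) (f (x i))| ≤ L * |f (x i)| := by
            simpa [hzero (x i)] using hLip (x i) (f (x i)) 0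
          exact h1.trans (mul_le_mul_of_nonneg_left (hC f hf i) hL)
  have hb2 : ∀ (s : Fin n → Bool), ∀ f ∈ F,
      |∑ i, (if s i then (1:ℝ) else -1) * f (x i)| ≤ ∑ _i : Fin n, C := by
    intro s f hf
    calc |∑ i, (if s i then (1:ℝ) else -1) * f (x i)|
        ≤ ∑ i, |(if s i then (1:ℝ) else -1) * f (x i)| := Finset.abs_sum_le_sum_abs _ _
      _ ≤ ∑ _i : Fin n, C := by
          refine Finset.sum_le_sum fun i _ => ?_
          rw [abs_mul, habsif s i, one_mul]
          exact hC f hf i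
  have hsum1 : ∑ s : Fin n → Bool,
        sSup ((fun f : X → ℝ => (1 / n : ℝ) *
          |∑ i, (if s i then (1:ℝ) else -1) * Ψ (x i) (f (x i))|) '' F)
      = (1 / n : ℝ) * ∑ s : Fin n → Bool,
          sSup ((fun f : X → ℝ =>
            |∑ i, (if s i then (1:ℝ) else -1) * Ψ (x i) (f (x i))|) '' F) := by
    rw [Finset.mul_sum]
    exact Finset.sum_congr rfl fun s _ => hscale _ _ (hb1 s)
  have hsum2 : ∑ s : Fin n → Bool,
        sSup ((fun f : X → ℝ => (1 / n : ℝ) *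
          |∑ i, (if s i then (1:ℝ) else -1) * f (x i)|) '' F)
      = (1 / n : ℝ) * ∑ s : Fin n → Bool,
          sSup ((fun f : X → ℝ => |∑ i, (if s i then (1:ℝ) else -1) * f (x i)|) '' F) := by
    rw [Finset.mul_sum]
    exact Finset.sum_congr rfl fun s _ => hscale _ _ (hb2 s)
  rw [hsum1, hsum2]
  have hc : (0:ℝ) ≤ (1 / 2 ^ n : ℝ) * (1 / n : ℝ) := by positivity
  calc (1 / 2 ^ n : ℝ) * ((1 / n : ℝ) * ∑ s : Fin n → Bool,
        sSup ((fun f : X → ℝ =>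
          |∑ i, (if s i then (1:ℝ) else -1) * Ψ (x i) (f (x i))|) '' F))
      = ((1 / 2 ^ n : ℝ) * (1 / n : ℝ)) * ∑ s : Fin n → Bool,
          sSup ((fun f : X → ℝ =>
            |∑ i, (if s i then (1:ℝ) else -1) * Ψ (x i) (f (x i))|) '' F) := by ring
    _ ≤ ((1 / 2 ^ n : ℝ) * (1 / n : ℝ)) * (2 * L * ∑ s : Fin n → Bool,
          sSup ((fun f : X → ℝ => |∑ i, (if s i then (1:ℝ) else -1) * f (x i)|) '' F)) :=
        mul_le_mul_of_nonneg_left hkey hc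
    _ = 2 * L * ((1 / 2 ^ n : ℝ) * ((1 / n : ℝ) * ∑ s : Fin n → Bool,
          sSup ((fun f : X → ℝ => |∑ i, (if s i then (1:ℝ) else -1) * f (x i)|) '' F))) := by
        ring
end

section
/- Let (X, μ) be a probability space, let B > 0, and let F be a nonempty countable class of measurable functions X → [−B, B]. Let Z₁,…,Z_n be i.i.d. random variables with law μ and let σ₁,…,σ_n be i.i.d. Rademacher variables (uniform on {−1,1}) independent of (Z₁,…,Z_n). Then E[ sup_{f∈F} | E_μ[f] − (1/n)Σ_{i=1}^n f(Zᵢ) | ] ≤ 2·E[ sup_{f∈F} (1/n)|Σ_{i=1}^n σᵢ f(Zᵢ)| ]. -/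
open MeasureTheory

section SymmAux

variable {X : Type*} [MeasurableSpace X]

private lemma intOfBdd {α : Type*} [MeasurableSpace α] (ν : Measure α) [IsFiniteMeasure ν]
    {f : α → ℝ} {C : ℝ} (hf : Measurable f) (h : ∀ a, |f a| ≤ C) : Integrable f ν :=
  (integrable_const C).mono' hf.aestronglyMeasurable
    (Filter.Eventually.of_forall fun a => by simpa [Real.norm_eq_abs] using h a)

private lemma intComp {α β : Type*} [MeasurableSpace α] [MeasurableSpace β]
    {μ' : Measure α} {ν : Measure β} {T : α → β} (hT : MeasurePreserving T μ' ν)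
    {g : β → ℝ} (hg : Measurable g) : ∫ x, g (T x) ∂μ' = ∫ y, g y ∂ν := by
  have h2 := integral_map (μ := μ') (φ := T) hT.measurable.aemeasurable
    (f := g) hg.aestronglyMeasurable
  rw [hT.map_eq] at h2
  exact h2.symm

private lemma bdd_of (g : ℕ → ℝ) (C : ℝ) (h : ∀ k, g k ≤ C) : BddAbove (Set.range g) :=
  ⟨C, by rintro _ ⟨k, rfl⟩; exact h k⟩

private lemma mpEval {n : ℕ} (μ : Measure X) [IsProbabilityMeasure μ] (i : Fin n) :
    MeasurePreserving (Function.eval i) (Measure.pi fun _ : Fin n => μ) μ := by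
  refine ⟨measurable_pi_apply i, ?_⟩
  ext s hs
  rw [Measure.map_apply (measurable_pi_apply i) hs, Set.eval_preimage, Measure.pi_pi]
  rw [Finset.prod_eq_single i (fun j _ hj => by simp [Function.update_of_ne hj]) (by simp)]
  simp

private lemma mpSwap {n : ℕ} (μ : Measure X) [IsProbabilityMeasure μ] (s : Fin n → Bool) :
    MeasurePreserving
      (fun p : (Fin n → X) × (Fin n → X) =>
        ((fun i => if s i then p.1 i else p.2 i, fun i => if s i then p.2 i else p.1 i) :
          (Fin n → X) × (Fin n → X)))
      ((Measure.pi fun _ : Fin n => μ).prod (Measure.pi fun _ : Fin n => μ))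
      ((Measure.pi fun _ : Fin n => μ).prod (Measure.pi fun _ : Fin n => μ)) := by
  classical
  set Φ := MeasurableEquiv.arrowProdEquivProdArrow X X (Fin n) with hΦdef
  have hΦ : MeasurePreserving Φ (Measure.pi fun _ : Fin n => μ.prod μ)
      ((Measure.pi fun _ : Fin n => μ).prod (Measure.pi fun _ : Fin n => μ)) :=
    measurePreserving_arrowProdEquivProdArrow X X (Fin n) (fun _ => μ) (fun _ => μ)
  have hΦs := MeasurePreserving.symm Φ hΦ
  have hG : MeasurePreserving (fun (w : Fin n → X × X) (i : Fin n) =>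
      (if s i then w i else Prod.swap (w i))) (Measure.pi fun _ : Fin n => μ.prod μ)
      (Measure.pi fun _ : Fin n => μ.prod μ) := by
    exact measurePreserving_pi (fun _ : Fin n => μ.prod μ) (fun _ : Fin n => μ.prod μ)
      (f := fun i (q : X × X) => if s i then q else Prod.swap q)
      (fun i => by
        by_cases h : s i
        · simp [h]; exact MeasurePreserving.id (μ.prod μ)
        · simpa [h] using Measure.measurePreserving_swap (μ := μ) (ν := μ))
  have hcomp := (hΦ.comp hG).comp hΦs
  have key : ((⇑Φ ∘ (fun (w : Fin n → X × X) (i : Fin n) => if s i then w i else Prod.swap (w i)))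
      ∘ ⇑Φ.symm)
      = fun p : (Fin n → X) × (Fin n → X) =>
        ((fun i => if s i then p.1 i else p.2 i, fun i => if s i then p.2 i else p.1 i) :
          (Fin n → X) × (Fin n → X)) := by
    funext p
    refine Prod.ext ?_ ?_ <;> funext i <;> by_cases h : s i <;>
      simp [hΦdef, MeasurableEquiv.arrowProdEquivProdArrow, Equiv.arrowProdEquivProdArrow, h,
        Function.comp, MeasurableEquiv.coe_mk, EquivLike.coe_coe]
  rw [key] at hcomp
  exact hcomp

private noncomputable def Emp (e : ℕ → X → ℝ) (n k : ℕ) (z : Fin n → X) : ℝ := (1 / n : ℝ) * ∑ i, e k (z i)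

private noncomputable def DD (μ : Measure X) (e : ℕ → X → ℝ) (n : ℕ) (z : Fin n → X) : ℝ :=
  ⨆ k, |(∫ x, e k x ∂μ) - Emp e n k z|

private noncomputable def SS (e : ℕ → X → ℝ) (n : ℕ) (p : (Fin n → X) × (Fin n → X)) : ℝ :=
  ⨆ k, |Emp e n k p.2 - Emp e n k p.1|

private noncomputable def RR (e : ℕ → X → ℝ) (n : ℕ) (s : Fin n → Bool) (z : Fin n → X) : ℝ :=
  ⨆ k, (1 / n : ℝ) * |∑ i, (if s i then (1:ℝ) else -1) * e k (z i)|

variable (μ : Measure X) [IsProbabilityMeasure μ] (e : ℕ → X → ℝ) {B : ℝ} {n : ℕ}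

private lemma emp_meas (hem : ∀ k, Measurable (e k)) (k : ℕ) :
    Measurable (Emp e n k) :=
  measurable_const.mul (Finset.measurable_sum _ fun i _ => (hem k).comp (measurable_pi_apply i))

private lemma emp_bd (heb : ∀ k x, |e k x| ≤ B) (hn : 0 < n) (k : ℕ) (z : Fin n → X) :
    |Emp e n k z| ≤ B := by
  have hnR : (0:ℝ) < n := by exact_mod_cast hn
  rw [Emp, abs_mul, abs_of_nonneg (le_of_lt (by positivity : (0:ℝ) < 1/n))]
  have h1 : |∑ i, e k (z i)| ≤ (n:ℝ) * B := by
    calc |∑ i, e k (z i)| ≤ ∑ i, |e k (z i)| := Finset.abs_sum_le_sum_abs _ _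
      _ ≤ ∑ _i : Fin n, B := Finset.sum_le_sum fun i _ => heb k (z i)
      _ = (n:ℝ) * B := by simp [Finset.sum_const, nsmul_eq_mul]
  calc (1/n:ℝ) * |∑ i, e k (z i)| ≤ (1/n:ℝ) * ((n:ℝ)*B) :=
        mul_le_mul_of_nonneg_left h1 (by positivity)
    _ = B := by field_simp

private lemma rad_bd (heb : ∀ k x, |e k x| ≤ B) (hn : 0 < n) (s : Fin n → Bool) (k : ℕ)
    (z : Fin n → X) : (1 / n : ℝ) * |∑ i, (if s i then (1:ℝ) else -1) * e k (z i)| ≤ B := by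
  have hnR : (0:ℝ) < n := by exact_mod_cast hn
  have h1 : |∑ i, (if s i then (1:ℝ) else -1) * e k (z i)| ≤ (n:ℝ) * B := by
    calc |∑ i, (if s i then (1:ℝ) else -1) * e k (z i)|
        ≤ ∑ i, |(if s i then (1:ℝ) else -1) * e k (z i)| := Finset.abs_sum_le_sum_abs _ _
      _ ≤ ∑ _i : Fin n, B := by
          refine Finset.sum_le_sum fun i _ => ?_
          rw [abs_mul]
          have : |(if s i then (1:ℝ) else -1)| = 1 := by by_cases h : s i <;> simp [h]
          rw [this, one_mul]
          exact heb k (z i)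
      _ = (n:ℝ) * B := by simp [Finset.sum_const, nsmul_eq_mul]
  calc (1/n:ℝ) * |∑ i, (if s i then (1:ℝ) else -1) * e k (z i)| ≤ (1/n:ℝ) * ((n:ℝ)*B) :=
        mul_le_mul_of_nonneg_left h1 (by positivity)
    _ = B := by field_simp

private lemma c_bd (heb : ∀ k x, |e k x| ≤ B) (k : ℕ) : |∫ x, e k x ∂μ| ≤ B := by
  have := norm_integral_le_of_norm_le_const (μ := μ) (f := e k) (C := B)
    (Filter.Eventually.of_forall fun x => by simpa [Real.norm_eq_abs] using heb k x)
  simpa [Real.norm_eq_abs, measure_univ] using this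

private lemma emp_int_eq (hem : ∀ k, Measurable (e k)) (heb : ∀ k x, |e k x| ≤ B)
    (hn : 0 < n) (k : ℕ) :
    ∫ z, Emp e n k z ∂(Measure.pi fun _ : Fin n => μ) = ∫ x, e k x ∂μ := by
  have hnR : (0:ℝ) < n := by exact_mod_cast hn
  have hi : ∀ i : Fin n, Integrable (fun z : Fin n → X => e k (z i))
      (Measure.pi fun _ : Fin n => μ) := fun i =>
    intOfBdd _ ((hem k).comp (measurable_pi_apply i)) fun z => heb k (z i)
  calc ∫ z, Emp e n k z ∂(Measure.pi fun _ : Fin n => μ)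
      = (1/n:ℝ) * ∫ z, ∑ i, e k (z i) ∂(Measure.pi fun _ : Fin n => μ) := by
        simp only [Emp]; exact integral_const_mul _ _
    _ = (1/n:ℝ) * ∑ i : Fin n, ∫ z, e k (z i) ∂(Measure.pi fun _ : Fin n => μ) := by
        rw [integral_finset_sum _ fun i _ => hi i]
    _ = (1/n:ℝ) * ∑ _i : Fin n, ∫ x, e k x ∂μ := by
        congr 1
        exact Finset.sum_congr rfl fun i _ => intComp (mpEval μ i) (hem k)
    _ = ∫ x, e k x ∂μ := by
        rw [Finset.sum_const, Finset.card_univ, Fintype.card_fin, nsmul_eq_mul]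
        field_simp

private theorem symm_aux (hB : 0 < B)
    (hem : ∀ k, Measurable (e k)) (heb : ∀ k x, |e k x| ≤ B)
    (hn : 0 < n) :
    (∫ z : Fin n → X, DD μ e n z ∂(Measure.pi fun _ => μ))
      ≤ 2 * ((1 / 2 ^ n : ℝ) * ∑ s : Fin n → Bool,
          ∫ z : Fin n → X, RR e n s z ∂(Measure.pi fun _ => μ)) := by
  classical
  set π : Measure (Fin n → X) := Measure.pi fun _ : Fin n => μ with hπdef
  haveI : IsProbabilityMeasure π := by rw [hπdef]; infer_instance
  set P : Measure ((Fin n → X) × (Fin n → X)) := π.prod π with hPdef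
  -- basic bounds
  have hD_term_bd : ∀ (z : Fin n → X) (k : ℕ),
      |(∫ x, e k x ∂μ) - Emp e n k z| ≤ 2 * B := fun z k =>
    (abs_sub _ _).trans (by
      have := c_bd μ e heb k
      have := emp_bd e heb hn k z
      linarith)
  have hS_term_bd : ∀ (p : (Fin n → X) × (Fin n → X)) (k : ℕ),
      |Emp e n k p.2 - Emp e n k p.1| ≤ 2 * B := fun p k =>
    (abs_sub _ _).trans (by
      have := emp_bd e heb hn k p.1
      have := emp_bd e heb hn k p.2
      linarith)
  -- measurability
  have hD_meas : Measurable (DD μ e n) :=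
    Measurable.iSup fun k => (measurable_const.sub (emp_meas e hem k)).abs
  have hS_meas : Measurable (SS e n) :=
    Measurable.iSup fun k =>
      (((emp_meas e hem k).comp measurable_snd).sub
        ((emp_meas e hem k).comp measurable_fst)).abs
  have hR_meas : ∀ s : Fin n → Bool, Measurable (RR e n s) := fun s =>
    Measurable.iSup fun k =>
      measurable_const.mul
        (Finset.measurable_sum _ fun i _ =>
          (measurable_const.mul ((hem k).comp (measurable_pi_apply i)))).abs
  -- abs bounds for the sups
  have hD_abs : ∀ z, |DD μ e n z| ≤ 2 * B := fun z => by
    have h0 : 0 ≤ DD μ e n z :=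
      le_trans (abs_nonneg _) (le_ciSup (bdd_of _ (2*B) (hD_term_bd z)) 0)
    rw [abs_of_nonneg h0]
    exact ciSup_le fun k => hD_term_bd z k
  have hS_abs : ∀ p, |SS e n p| ≤ 2 * B := fun p => by
    have h0 : 0 ≤ SS e n p :=
      le_trans (abs_nonneg _) (le_ciSup (bdd_of _ (2*B) (hS_term_bd p)) 0)
    rw [abs_of_nonneg h0]
    exact ciSup_le fun k => hS_term_bd p k
  have hR_abs : ∀ (s : Fin n → Bool) z, |RR e n s z| ≤ B := fun s z => by
    have h0 : 0 ≤ RR e n s z := by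
      refine le_trans ?_ (le_ciSup (bdd_of _ B (fun k => rad_bd e heb hn s k z)) 0)
      positivity
    rw [abs_of_nonneg h0]
    exact ciSup_le fun k => rad_bd e heb hn s k z
  -- integrabilities
  have hD_int : Integrable (DD μ e n) π := intOfBdd π hD_meas hD_abs
  have hS_int : Integrable (SS e n) P := intOfBdd P hS_meas hS_abs
  have hR_int : ∀ s, Integrable (RR e n s) π := fun s =>
    intOfBdd π (hR_meas s) (hR_abs s)
  -- Step A : pointwise domination by the ghost-sample integral
  have stepA : ∀ z : Fin n → X, DD μ e n z ≤ ∫ z', SS e n (z, z') ∂π := by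
    intro z
    have hslice : Integrable (fun z' => SS e n (z, z')) π :=
      intOfBdd π (hS_meas.comp measurable_prodMk_left) fun z' => hS_abs (z, z')
    refine ciSup_le fun k => ?_
    have hempint : Integrable (Emp e n k) π :=
      intOfBdd π (emp_meas e hem k) (emp_bd e heb hn k)
    have h1 : ∫ z', (Emp e n k z' - Emp e n k z) ∂π
        = (∫ x, e k x ∂μ) - Emp e n k z := by
      rw [integral_sub hempint (integrable_const _), integral_const]
      rw [hπdef]
      rw [emp_int_eq μ e hem heb hn k]
      simp [measure_univ]
    calc |(∫ x, e k x ∂μ) - Emp e n k z|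
        = |∫ z', (Emp e n k z' - Emp e n k z) ∂π| := by rw [h1]
      _ ≤ ∫ z', |Emp e n k z' - Emp e n k z| ∂π := by
          simpa [Real.norm_eq_abs] using
            norm_integral_le_integral_norm (μ := π)
              (fun z' => Emp e n k z' - Emp e n k z)
      _ ≤ ∫ z', SS e n (z, z') ∂π := by
          refine integral_mono
            (intOfBdd π ((emp_meas e hem k).sub measurable_const).abs
              (fun z' => by
                rw [abs_abs]
                exact hS_term_bd (z, z') k))
            hslice fun z' => ?_
          exact le_ciSup (bdd_of _ (2*B) (hS_term_bd (z, z'))) k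
  -- Step C : symmetrization for a fixed sign pattern
  have stepC : ∀ s : Fin n → Bool,
      ∫ p, SS e n p ∂P ≤ 2 * ∫ z, RR e n s z ∂π := by
    intro s
    set T : (Fin n → X) × (Fin n → X) → (Fin n → X) × (Fin n → X) :=
      fun p => ((fun i => if s i then p.1 i else p.2 i,
                 fun i => if s i then p.2 i else p.1 i)) with hTdef
    have hT : MeasurePreserving T P P := mpSwap μ s
    have e1 : ∫ p, SS e n p ∂P = ∫ p, SS e n (T p) ∂P :=
      (intComp hT hS_meas).symm
    have hRf_int : Integrable (fun p : (Fin n → X) × (Fin n → X) => RR e n s p.1) P :=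
      intOfBdd P ((hR_meas s).comp measurable_fst) fun p => hR_abs s p.1
    have hRs_int : Integrable (fun p : (Fin n → X) × (Fin n → X) => RR e n s p.2) P :=
      intOfBdd P ((hR_meas s).comp measurable_snd) fun p => hR_abs s p.2
    have hpt : ∀ p, SS e n (T p) ≤ RR e n s p.2 + RR e n s p.1 := by
      intro p
      refine ciSup_le fun k => ?_
      have hdiff : Emp e n k (T p).2 - Emp e n k (T p).1
          = (1/n:ℝ) * ∑ i, (if s i then (1:ℝ) else -1) * e k (p.2 i)
            - (1/n:ℝ) * ∑ i, (if s i then (1:ℝ) else -1) * e k (p.1 i) := by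
        simp only [hTdef, Emp, ← mul_sub, ← Finset.sum_sub_distrib]
        congr 1
        refine Finset.sum_congr rfl fun i _ => ?_
        by_cases h : s i <;> simp [h] <;> ring
      rw [hdiff]
      refine le_trans (abs_sub _ _) (add_le_add ?_ ?_)
      · rw [abs_mul, abs_of_nonneg (by positivity : (0:ℝ) ≤ 1/n)]
        exact le_ciSup (bdd_of _ B (fun k' => rad_bd e heb hn s k' p.2)) k
      · rw [abs_mul, abs_of_nonneg (by positivity : (0:ℝ) ≤ 1/n)]
        exact le_ciSup (bdd_of _ B (fun k' => rad_bd e heb hn s k' p.1)) k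
    calc ∫ p, SS e n p ∂P = ∫ p, SS e n (T p) ∂P := e1
      _ ≤ ∫ p, (RR e n s p.2 + RR e n s p.1) ∂P := by
          refine integral_mono
            (intOfBdd P (hS_meas.comp hT.measurable) fun p => hS_abs (T p))
            (hRs_int.add hRf_int) hpt
      _ = (∫ p, RR e n s p.2 ∂P) + ∫ p, RR e n s p.1 ∂P :=
          integral_add hRs_int hRf_int
      _ = (∫ z, RR e n s z ∂π) + ∫ z, RR e n s z ∂π := by
          rw [hPdef, integral_fun_snd (f := RR e n s), integral_fun_fst (f := RR e n s)]
          simp [measure_univ]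
      _ = 2 * ∫ z, RR e n s z ∂π := (two_mul _).symm
  -- combine
  have h2n : (0:ℝ) < 2 ^ n := by positivity
  calc ∫ z, DD μ e n z ∂π
      ≤ ∫ z, (∫ z', SS e n (z, z') ∂π) ∂π :=
        integral_mono hD_int hS_int.integral_prod_left stepA
    _ = ∫ p, SS e n p ∂P := (integral_prod _ hS_int).symm
    _ = (1 / 2 ^ n : ℝ) * ∑ _s : Fin n → Bool, ∫ p, SS e n p ∂P := by
        rw [Finset.sum_const, Finset.card_univ, nsmul_eq_mul]
        have hcard : (Fintype.card (Fin n → Bool) : ℝ) = 2 ^ n := by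
          simp [Fintype.card_fun]
        rw [hcard]
        field_simp
    _ ≤ (1 / 2 ^ n : ℝ) * ∑ s : Fin n → Bool, 2 * ∫ z, RR e n s z ∂π := by
        exact mul_le_mul_of_nonneg_left
          (Finset.sum_le_sum fun s _ => stepC s) (by positivity)
    _ = 2 * ((1 / 2 ^ n : ℝ) * ∑ s : Fin n → Bool, ∫ z, RR e n s z ∂π) := by
        rw [← Finset.mul_sum]
        ring

end SymmAux

/-- **Symmetrization inequality (Lemma 3.7).**
The expected uniform deviation between population and empirical means over a
class `F` is at most twice its Rademacher complexity.  The i.i.d. sample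
`Z₁,…,Z_n ∼ μ` is modelled by the product measure `Measure.pi (fun _ => μ)`,
and the expectation over the independent Rademacher signs is written as the
average over all sign patterns `s : Fin n → Bool`. -/
theorem symmetrization {X : Type*} [MeasurableSpace X] (μ : Measure X)
    [IsProbabilityMeasure μ] (B : ℝ) (hB : 0 < B)
    (F : Set (X → ℝ)) (hFc : F.Countable) (hFne : F.Nonempty)
    (hmeas : ∀ f ∈ F, Measurable f)
    (hrange : ∀ f ∈ F, ∀ x, f x ∈ Set.Icc (-B) B)
    (n : ℕ) (hn : 0 < n) :
    (∫ z : Fin n → X,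
        sSup ((fun f : X → ℝ =>
          |(∫ x, f x ∂μ) - (1 / n : ℝ) * ∑ i, f (z i)|) '' F)
        ∂(Measure.pi fun _ => μ))
      ≤ 2 * ((1 / 2 ^ n : ℝ) * ∑ s : Fin n → Bool,
          ∫ z : Fin n → X,
            sSup ((fun f : X → ℝ =>
              (1 / n : ℝ) * |∑ i, (if s i then (1:ℝ) else -1) * f (z i)|) '' F)
            ∂(Measure.pi fun _ => μ)) := by
  obtain ⟨e, he⟩ := hFc.exists_eq_range hFne
  have hkey : ∀ (G : (X → ℝ) → ℝ), sSup (G '' F) = ⨆ k, G (e k) := by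
    intro G
    rw [he, ← Set.range_comp]
    rfl
  have hem : ∀ k, Measurable (e k) := fun k =>
    hmeas _ (by rw [he]; exact Set.mem_range_self k)
  have heb : ∀ k x, |e k x| ≤ B := fun k x => by
    have h := hrange _ (by rw [he]; exact Set.mem_range_self k) x
    exact abs_le.mpr ⟨h.1, h.2⟩
  simp only [hkey]
  exact symm_aux μ e hB hem heb hn
end

section
/- Let n ≥ 1, B > 0, and let A be a nonempty countable subset of ℝ^n with 0 ∈ A and sup_{a∈A} max_{1≤i≤n}|aᵢ| ≤ B. Suppose C : (0, B] → ℕ is an antitone function such that for every ε ∈ (0, B] there exists a finite set V_ε ⊆ ℝ^n with |V_ε| ≤ C(ε) which is an ε-cover of A with respect to d_∞ (every a ∈ A has v ∈ V_ε with max_i |aᵢ − vᵢ| ≤ ε). Let σ₁,…,σ_n be i.i.d. Rademacher variables (uniform on {−1,1}). Then E_σ[ sup_{a∈A} (1/n)|Σ_{i=1}^n σᵢ aᵢ| ] ≤ inf_{0<δ<B} ( 4δ + (12/√n)·∫_δ^B √(log(2·C(ε))) dε ). -/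
set_option maxHeartbeats 2000000

open Real Finset


open Real Finset

lemma avg_exp_rademacher (n : ℕ) (c : Fin n → ℝ) :
    (1 / 2 ^ n : ℝ) * ∑ s : Fin n → Bool,
      Real.exp (∑ i, (if s i then (1:ℝ) else -1) * c i)
    = ∏ i, Real.cosh (c i) := by
  have h1 : ∀ s : Fin n → Bool,
      Real.exp (∑ i, (if s i then (1:ℝ) else -1) * c i)
      = ∏ i, Real.exp ((if s i then (1:ℝ) else -1) * c i) := by
    intro s; exact Real.exp_sum _ _
  simp_rw [h1]
  rw [← Fintype.prod_sum (fun i (b : Bool) => Real.exp ((if b then (1:ℝ) else -1) * c i))]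
  have h2 : ∀ i : Fin n, (∑ b : Bool, Real.exp ((if b then (1:ℝ) else -1) * c i))
      = 2 * Real.cosh (c i) := by
    intro i
    rw [Fintype.sum_bool]
    simp [Real.cosh_eq]
    ring
  simp_rw [h2]
  rw [Finset.prod_mul_distrib]
  simp [Finset.prod_const]

lemma massart (n : ℕ) (hn : 1 ≤ n) (W : Finset (Fin n → ℝ)) (hW : W.Nonempty)
    (R : ℝ) (hR : 0 < R) (hbd : ∀ w ∈ W, ∀ i, |w i| ≤ R) :
    (1 / 2 ^ n : ℝ) * ∑ s : Fin n → Bool,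
      W.sup' hW (fun w => (1 / n : ℝ) * |∑ i, (if s i then (1:ℝ) else -1) * w i|)
    ≤ R * Real.sqrt (2 * Real.log (2 * W.card)) / Real.sqrt n := by
  have hN : 1 ≤ W.card := Finset.card_pos.mpr hW
  set L : ℝ := Real.log (2 * W.card) with hLdef
  have h2N : (1:ℝ) < 2 * W.card := by
    have : (1:ℝ) ≤ W.card := by exact_mod_cast hN
    linarith
  have hL : 0 < L := Real.log_pos h2N
  have hn' : (0:ℝ) < n := by exact_mod_cast hn
  set lam : ℝ := Real.sqrt (2 * n * L) / R with hlam
  have hlam0 : 0 < lam := div_pos (Real.sqrt_pos.mpr (by positivity)) hR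
  set f : (Fin n → Bool) → ℝ := fun s =>
    W.sup' hW (fun w => (1 / n : ℝ) * |∑ i, (if s i then (1:ℝ) else -1) * w i|) with hf
  set E : ℝ := (1 / 2 ^ n : ℝ) * ∑ s, f s with hE
  -- MGF bound
  have mgf : ∀ (t : ℝ) (w : Fin n → ℝ), w ∈ W →
      (1 / 2 ^ n : ℝ) * ∑ s : Fin n → Bool,
        Real.exp (t * ∑ i, (if s i then (1:ℝ) else -1) * w i)
      ≤ Real.exp (t ^ 2 * R ^ 2 * n / 2) := by
    intro t w hw
    have harg : ∀ s : Fin n → Bool,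
        t * ∑ i, (if s i then (1:ℝ) else -1) * w i
        = ∑ i, (if s i then (1:ℝ) else -1) * (t * w i) := by
      intro s; rw [Finset.mul_sum]; congr 1; ext i; ring
    simp_rw [harg]
    rw [avg_exp_rademacher n (fun i => t * w i)]
    calc ∏ i, Real.cosh (t * w i) ≤ ∏ i, Real.exp ((t * w i) ^ 2 / 2) := by
          apply Finset.prod_le_prod
          · intro i _; exact (Real.cosh_pos _).le
          · intro i _; exact Real.cosh_le_exp_half_sq _
      _ = Real.exp (∑ i, (t * w i) ^ 2 / 2) := (Real.exp_sum _ _).symm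
      _ ≤ Real.exp (t ^ 2 * R ^ 2 * n / 2) := by
          apply Real.exp_le_exp.mpr
          calc ∑ i, (t * w i) ^ 2 / 2 ≤ ∑ _i : Fin n, t ^ 2 * R ^ 2 / 2 :=
                Finset.sum_le_sum fun i _ => by
                  have h := hbd w hw i
                  have h0 := abs_nonneg (w i)
                  nlinarith [sq_nonneg t, sq_abs (w i), mul_le_mul h h h0 hR.le, sq_nonneg (t * w i), mul_nonneg (sq_nonneg t) (sq_nonneg (w i))]
            _ = t ^ 2 * R ^ 2 * n / 2 := by
                rw [Finset.sum_const]; simp; ring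
  -- pointwise bound on exp (lam * sup')
  have pointwise : ∀ s : Fin n → Bool, Real.exp (lam * f s) ≤
      ∑ w ∈ W, (Real.exp ((lam / n) * ∑ i, (if s i then (1:ℝ) else -1) * w i)
        + Real.exp (-((lam / n) * ∑ i, (if s i then (1:ℝ) else -1) * w i))) := by
    intro s
    obtain ⟨w₀, hw₀, hsup⟩ := Finset.exists_mem_eq_sup' hW
      (fun w => (1 / n : ℝ) * |∑ i, (if s i then (1:ℝ) else -1) * w i|)
    set X := ∑ i, (if s i then (1:ℝ) else -1) * w₀ i with hX
    have h1 : lam * f s = (lam / n) * |X| := by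
      rw [hf]; simp only []; rw [hsup]; field_simp
    rw [h1]
    have h2 : Real.exp ((lam / n) * |X|)
        ≤ Real.exp ((lam / n) * X) + Real.exp (-((lam / n) * X)) := by
      rcases abs_cases X with ⟨h, _⟩ | ⟨h, _⟩
      · rw [h]; exact le_add_of_nonneg_right (Real.exp_pos _).le
      · rw [h, mul_neg]
        exact le_add_of_nonneg_left (Real.exp_pos _).le
    have h3 := Finset.single_le_sum
      (f := fun w => Real.exp ((lam / n) * ∑ i, (if s i then (1:ℝ) else -1) * w i)
        + Real.exp (-((lam / n) * ∑ i, (if s i then (1:ℝ) else -1) * w i)))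
      (fun w _ => add_nonneg (Real.exp_pos _).le (Real.exp_pos _).le) hw₀
    exact h2.trans h3
  -- average of exp bound
  have avg : (1 / 2 ^ n : ℝ) * ∑ s : Fin n → Bool, Real.exp (lam * f s)
      ≤ 2 * W.card * Real.exp (lam ^ 2 * R ^ 2 / (2 * n)) := by
    have step1 : (1 / 2 ^ n : ℝ) * ∑ s : Fin n → Bool, Real.exp (lam * f s)
        ≤ (1 / 2 ^ n : ℝ) * ∑ s : Fin n → Bool,
            ∑ w ∈ W, (Real.exp ((lam / n) * ∑ i, (if s i then (1:ℝ) else -1) * w i)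
              + Real.exp (-((lam / n) * ∑ i, (if s i then (1:ℝ) else -1) * w i))) := by
      apply mul_le_mul_of_nonneg_left (Finset.sum_le_sum fun s _ => pointwise s) (by positivity)
    refine step1.trans ?_
    rw [Finset.sum_comm]
    rw [Finset.mul_sum]
    have step2 : ∀ w ∈ W,
        (1 / 2 ^ n : ℝ) * ∑ s : Fin n → Bool,
            (Real.exp ((lam / n) * ∑ i, (if s i then (1:ℝ) else -1) * w i)
              + Real.exp (-((lam / n) * ∑ i, (if s i then (1:ℝ) else -1) * w i)))
        ≤ 2 * Real.exp (lam ^ 2 * R ^ 2 / (2 * n)) := by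
      intro w hw
      rw [Finset.sum_add_distrib, mul_add]
      have e1 := mgf (lam / n) w hw
      have e2 := mgf (-(lam / n)) w hw
      have hexp : (lam / n) ^ 2 * R ^ 2 * n / 2 = lam ^ 2 * R ^ 2 / (2 * n) := by
        field_simp
      have e2' : (1 / 2 ^ n : ℝ) * ∑ s : Fin n → Bool,
          Real.exp (-((lam / n) * ∑ i, (if s i then (1:ℝ) else -1) * w i))
          ≤ Real.exp (lam ^ 2 * R ^ 2 / (2 * n)) := by
        have harg : ∀ s : Fin n → Bool,
            -((lam / n) * ∑ i, (if s i then (1:ℝ) else -1) * w i)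
            = (-(lam / n)) * ∑ i, (if s i then (1:ℝ) else -1) * w i := by
          intro s; ring
        simp_rw [harg]
        calc _ ≤ Real.exp ((-(lam / n)) ^ 2 * R ^ 2 * n / 2) := e2
          _ = _ := by rw [← hexp]; ring_nf
      have e1' : (1 / 2 ^ n : ℝ) * ∑ s : Fin n → Bool,
          Real.exp ((lam / n) * ∑ i, (if s i then (1:ℝ) else -1) * w i)
          ≤ Real.exp (lam ^ 2 * R ^ 2 / (2 * n)) := by
        calc _ ≤ Real.exp ((lam / n) ^ 2 * R ^ 2 * n / 2) := e1
          _ = _ := by rw [hexp]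
      linarith
    calc ∑ w ∈ W, ((1 / 2 ^ n : ℝ) *
          ∑ s : Fin n → Bool,
            (Real.exp ((lam / n) * ∑ i, (if s i then (1:ℝ) else -1) * w i)
              + Real.exp (-((lam / n) * ∑ i, (if s i then (1:ℝ) else -1) * w i))))
        ≤ ∑ _w ∈ W, 2 * Real.exp (lam ^ 2 * R ^ 2 / (2 * n)) := Finset.sum_le_sum step2
      _ = 2 * W.card * Real.exp (lam ^ 2 * R ^ 2 / (2 * n)) := by
          rw [Finset.sum_const]; rw [nsmul_eq_mul]; ring
  -- Jensen
  have hcard : (Finset.univ : Finset (Fin n → Bool)).card = 2 ^ n := by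
    simp [Finset.card_univ]
  have jensen : Real.exp (lam * E) ≤ (1 / 2 ^ n : ℝ) * ∑ s : Fin n → Bool, Real.exp (lam * f s) := by
    have hconv := convexOn_exp
    have h0 : ∀ s ∈ (Finset.univ : Finset (Fin n → Bool)), (0:ℝ) ≤ (1 / 2 ^ n : ℝ) :=
      fun _ _ => by positivity
    have h1 : ∑ _s ∈ (Finset.univ : Finset (Fin n → Bool)), (1 / 2 ^ n : ℝ) = 1 := by
      rw [Finset.sum_const, hcard, nsmul_eq_mul]
      push_cast
      field_simp
    have hmem : ∀ s ∈ (Finset.univ : Finset (Fin n → Bool)),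
        lam * f s ∈ (Set.univ : Set ℝ) := fun _ _ => trivial
    have := hconv.map_sum_le h0 h1 hmem
    simp only [smul_eq_mul] at this
    calc Real.exp (lam * E)
        = Real.exp (∑ s : Fin n → Bool, (1 / 2 ^ n : ℝ) * (lam * f s)) := by
          rw [hE]; congr 1; rw [Finset.mul_sum, Finset.mul_sum]
          exact Finset.sum_congr rfl fun s _ => by ring
      _ ≤ ∑ s : Fin n → Bool, (1 / 2 ^ n : ℝ) * Real.exp (lam * f s) := this
      _ = (1 / 2 ^ n : ℝ) * ∑ s : Fin n → Bool, Real.exp (lam * f s) := by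
          rw [Finset.mul_sum]
  -- conclude lam * E ≤ L + lam^2 R^2/(2n)
  have hKpos : (0:ℝ) < 2 * W.card * Real.exp (lam ^ 2 * R ^ 2 / (2 * n)) := by positivity
  have key : lam * E ≤ L + lam ^ 2 * R ^ 2 / (2 * n) := by
    have h := jensen.trans avg
    rw [← Real.le_log_iff_exp_le hKpos] at h
    rw [Real.log_mul (by positivity) (Real.exp_ne_zero _)] at h
    rw [Real.log_exp] at h
    exact h.trans (le_of_eq rfl)
  have hE_le : E ≤ L / lam + lam * R ^ 2 / (2 * n) := by
    have h2 : E ≤ (L + lam ^ 2 * R ^ 2 / (2 * n)) / lam := by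
      rw [le_div_iff₀ hlam0]
      calc E * lam = lam * E := by ring
        _ ≤ _ := key
    refine h2.trans (le_of_eq ?_)
    field_simp
  -- final arithmetic
  set u := Real.sqrt (2 * L) with hu
  set v := Real.sqrt n with hv
  have hu0 : 0 < u := Real.sqrt_pos.mpr (by linarith)
  have hv0 : 0 < v := Real.sqrt_pos.mpr hn'
  have hu2 : u ^ 2 = 2 * L := Real.sq_sqrt (by linarith)
  have hv2 : v ^ 2 = n := Real.sq_sqrt hn'.le
  have hlam_eq : lam = u * v / R := by
    rw [hlam, hu, hv]
    congr 1
    rw [← Real.sqrt_mul (by linarith : (0:ℝ) ≤ 2 * L)]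
    congr 1
    ring
  refine hE_le.trans (le_of_eq ?_)
  rw [hlam_eq]
  have hLu : L = u ^ 2 / 2 := by linarith
  have hnv : (n : ℝ) = v ^ 2 := hv2.symm
  rw [hLu, hnv]
  field_simp
  ring

/-- **Dudley-type chaining bound (Lemma 3.8).**
For a countable `A ⊆ ℝⁿ` with `0 ∈ A`, bounded by `B` in `d_∞`, whose `ε`-covering
numbers (w.r.t. `d_∞`) are bounded by an antitone function `C`, the Rademacher
average of `A` is at most `inf_{0<δ<B} (4δ + (12/√n)·∫_δ^B √(log(2·C(ε))) dε)`.
The expectation over the i.i.d. Rademacher signs is written as the average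
over all sign patterns. -/
theorem dudley_chaining (n : ℕ) (hn : 1 ≤ n) (B : ℝ) (hB : 0 < B)
    (A : Set (Fin n → ℝ)) (hAc : A.Countable) (h0 : (0 : Fin n → ℝ) ∈ A)
    (hAB : ∀ a ∈ A, ∀ i, |a i| ≤ B)
    (C : ℝ → ℕ) (hanti : AntitoneOn C (Set.Ioc 0 B))
    (hcover : ∀ ε ∈ Set.Ioc (0:ℝ) B, ∃ V : Finset (Fin n → ℝ),
      V.card ≤ C ε ∧ ∀ a ∈ A, ∃ v ∈ V, ∀ i, |a i - v i| ≤ ε) :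
    (1 / 2 ^ n : ℝ) * ∑ s : Fin n → Bool,
        sSup ((fun a : Fin n → ℝ =>
          (1 / n : ℝ) * |∑ i, (if s i then (1:ℝ) else -1) * a i|) '' A)
      ≤ sInf ((fun δ => 4 * δ +
          12 / Real.sqrt n * ∫ ε in δ..B, Real.sqrt (Real.log (2 * C ε))) ''
          Set.Ioo (0:ℝ) B) := by
  classical
  have hn' : (0:ℝ) < n := by exact_mod_cast hn
  have hsqn : (0:ℝ) < Real.sqrt n := Real.sqrt_pos.mpr hn'
  have hC1 : ∀ ε ∈ Set.Ioc (0:ℝ) B, 1 ≤ C ε := by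
    intro ε hε
    obtain ⟨V, hVcard, hVcov⟩ := hcover ε hε
    obtain ⟨v, hv, -⟩ := hVcov 0 h0
    exact le_trans (Finset.card_pos.mpr ⟨v, hv⟩) hVcard
  set g : ℝ → ℝ := fun ε => Real.sqrt (Real.log (2 * C ε)) with hg
  have hg_anti : AntitoneOn g (Set.Ioc 0 B) := by
    intro x hx y hy hxy
    apply Real.sqrt_le_sqrt
    apply Real.log_le_log
    · have := hC1 y hy
      have : (1:ℝ) ≤ C y := by exact_mod_cast this
      linarith
    · have := hanti hx hy hxy
      have : (C y : ℝ) ≤ C x := by exact_mod_cast this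
      linarith
  have hg_int : ∀ a b : ℝ, Set.uIcc a b ⊆ Set.Ioc 0 B →
      IntervalIntegrable g MeasureTheory.volume a b := by
    intro a b hsub
    exact (hg_anti.mono hsub).intervalIntegrable
  -- the trivial bound LHS ≤ B
  have hval_le_B : ∀ (s : Fin n → Bool) (a : Fin n → ℝ), a ∈ A →
      (1 / n : ℝ) * |∑ i, (if s i then (1:ℝ) else -1) * a i| ≤ B := by
    intro s a ha
    have habs : |∑ i, (if s i then (1:ℝ) else -1) * a i| ≤ (n : ℝ) * B := by
      calc |∑ i, (if s i then (1:ℝ) else -1) * a i|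
          ≤ ∑ i, |(if s i then (1:ℝ) else -1) * a i| := Finset.abs_sum_le_sum_abs _ _
        _ ≤ ∑ _i : Fin n, B := by
            apply Finset.sum_le_sum
            intro i _
            rw [abs_mul]
            have h1 : |(if s i then (1:ℝ) else -1)| = 1 := by
              by_cases h : s i <;> simp [h]
            rw [h1, one_mul]
            exact hAB a ha i
        _ = (n : ℝ) * B := by rw [Finset.sum_const]; simp [mul_comm]
    calc (1 / n : ℝ) * |∑ i, (if s i then (1:ℝ) else -1) * a i|
        ≤ (1 / n : ℝ) * ((n : ℝ) * B) := by
          apply mul_le_mul_of_nonneg_left habs (by positivity)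
      _ = B := by field_simp
  have hLHS_B : (1 / 2 ^ n : ℝ) * ∑ s : Fin n → Bool,
      sSup ((fun a : Fin n → ℝ =>
        (1 / n : ℝ) * |∑ i, (if s i then (1:ℝ) else -1) * a i|) '' A) ≤ B := by
    calc (1 / 2 ^ n : ℝ) * ∑ s : Fin n → Bool,
        sSup ((fun a : Fin n → ℝ =>
          (1 / n : ℝ) * |∑ i, (if s i then (1:ℝ) else -1) * a i|) '' A)
        ≤ (1 / 2 ^ n : ℝ) * ∑ _s : Fin n → Bool, B := by
          apply mul_le_mul_of_nonneg_left _ (by positivity)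
          apply Finset.sum_le_sum
          intro s _
          apply Real.sSup_le _ hB.le
          rintro x ⟨a, ha, rfl⟩
          exact hval_le_B s a ha
      _ = B := by
          rw [Finset.sum_const]
          simp [Finset.card_univ]
  -- main: lower-bound every element of the image
  apply le_csInf
  · exact ⟨_, Set.mem_image_of_mem _ (show B/2 ∈ Set.Ioo (0:ℝ) B from ⟨by linarith, by linarith⟩)⟩
  rintro x ⟨δ, ⟨hδ0, hδB⟩, rfl⟩
  have hint_nonneg : 0 ≤ ∫ ε in δ..B, g ε :=
    intervalIntegral.integral_nonneg hδB.le (fun u _ => Real.sqrt_nonneg _)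
  by_cases hcase : B ≤ 4 * δ
  · have h2 : (0:ℝ) ≤ 12 / Real.sqrt n * ∫ ε in δ..B, g ε :=
      mul_nonneg (by positivity) hint_nonneg
    have := hLHS_B
    simp only [hg] at h2 ⊢
    linarith
  push_neg at hcase
  -- dyadic scales
  set ε : ℕ → ℝ := fun j => B / 2 ^ j with hepsdef
  have hεpos : ∀ j, 0 < ε j := fun j => div_pos hB (by positivity)
  have hειoc : ∀ j, ε j ∈ Set.Ioc (0:ℝ) B := by
    intro j
    refine ⟨hεpos j, ?_⟩
    rw [hepsdef]
    apply div_le_self hB.le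
    exact one_le_pow₀ (by norm_num)
  have hεsucc : ∀ j, ε (j+1) = ε j / 2 := by
    intro j
    rw [hepsdef]
    simp only
    rw [pow_succ]
    field_simp
  have hεmono : ∀ j k : ℕ, j ≤ k → ε k ≤ ε j := by
    intro j k hjk
    rw [hepsdef]
    simp only
    apply div_le_div_of_nonneg_left hB.le (by positivity)
    exact pow_le_pow_right₀ (by norm_num) hjk
  -- choose the cutoff scale m
  have hexists : ∃ k, ε k ≤ 2 * δ := by
    obtain ⟨k, hk⟩ := pow_unbounded_of_one_lt (B / (2 * δ)) (by norm_num : (1:ℝ) < 2)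
    refine ⟨k, ?_⟩
    rw [hepsdef]
    simp only
    rw [div_le_iff₀ (by positivity)]
    rw [div_lt_iff₀ (by positivity)] at hk
    linarith
  have hk₀2 : 2 ≤ Nat.find hexists := by
    by_contra h
    push_neg at h
    have hspec := Nat.find_spec hexists
    interval_cases h' : (Nat.find hexists)
    · have hε0 : ε 0 = B := by rw [hepsdef]; simp
      rw [hε0] at hspec
      linarith
    · have hε1 : ε 1 = B / 2 := by rw [hepsdef]; simp
      rw [hε1] at hspec
      linarith
  set m := Nat.find hexists - 1 with hmdef
  have hm1 : 1 ≤ m := by omega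
  have hmk : m + 1 = Nat.find hexists := by omega
  have hεm1_le : ε (m+1) ≤ 2 * δ := by rw [hmk]; exact Nat.find_spec hexists
  have hεm_gt : 2 * δ < ε m := by
    have h := Nat.find_min hexists (show m < Nat.find hexists by omega)
    push_neg at h
    exact h
  have hδ_lt : δ < ε (m+1) := by
    have h := hεsucc m
    rw [h]
    linarith
  have hεm_le4 : ε m ≤ 4 * δ := by
    have h := hεsucc m
    rw [h] at hεm1_le
    linarith
  -- covers at each scale
  have hcov' : ∀ j : ℕ, ∃ V : Finset (Fin n → ℝ), V.card ≤ C (ε j) ∧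
      ∀ a ∈ A, ∃ v ∈ V, ∀ i, |a i - v i| ≤ ε j := fun j => hcover (ε j) (hειoc j)
  choose V hVcard hVcov using hcov'
  set V' : ℕ → Finset (Fin n → ℝ) := fun j => if j = 0 then {0} else V j with hV'def
  have hV'cov : ∀ (j : ℕ) (a : Fin n → ℝ), a ∈ A →
      ∃ v, v ∈ V' j ∧ ∀ i, |a i - v i| ≤ ε j := by
    intro j a ha
    by_cases hj : j = 0
    · subst hj
      refine ⟨0, by simp [hV'def], ?_⟩
      intro i
      have hε0 : ε 0 = B := by rw [hepsdef]; simp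
      rw [hε0]
      simpa using hAB a ha i
    · obtain ⟨v, hv1, hv2⟩ := hVcov j a ha
      exact ⟨v, by simp [hV'def, hj, hv1], hv2⟩
  choose pr hπmem hπdist using hV'cov
  have hπ0 : ∀ (a : Fin n → ℝ) (ha : a ∈ A), pr 0 a ha = 0 := by
    intro a ha
    have h := hπmem 0 a ha
    simpa [hV'def] using h
  have hV'card : ∀ j : ℕ, 1 ≤ j → (V' j).card ≤ C (ε j) := by
    intro j hj
    have hj0 : j ≠ 0 := by omega
    simp only [hV'def, if_neg hj0]
    exact hVcard j
  -- link sets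
  set W : ℕ → Finset (Fin n → ℝ) := fun j =>
    ((V' j ×ˢ V' (j-1)).image (fun p => p.1 - p.2)).filter (fun w => ∀ i, |w i| ≤ 3 * ε j)
    with hWdef
  have hWmem : ∀ (j : ℕ), 1 ≤ j → ∀ (a : Fin n → ℝ) (ha : a ∈ A),
      (pr j a ha - pr (j-1) a ha) ∈ W j := by
    intro j hj a ha
    rw [hWdef]
    simp only
    rw [Finset.mem_filter]
    constructor
    · apply Finset.mem_image.mpr
      exact ⟨(pr j a ha, pr (j-1) a ha),
        Finset.mem_product.mpr ⟨hπmem j a ha, hπmem (j-1) a ha⟩, rfl⟩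
    · intro i
      have d1 := hπdist j a ha i
      have d2 := hπdist (j-1) a ha i
      have hε' : ε (j-1) = 2 * ε j := by
        have h := hεsucc (j-1)
        rw [Nat.sub_add_cancel hj] at h
        linarith
      have htri : |pr j a ha i - pr (j-1) a ha i|
          ≤ |a i - pr j a ha i| + |a i - pr (j-1) a ha i| := by
        calc |pr j a ha i - pr (j-1) a ha i|
            = |(pr j a ha i - a i) + (a i - pr (j-1) a ha i)| := by ring_nf
          _ ≤ |pr j a ha i - a i| + |a i - pr (j-1) a ha i| := abs_add_le _ _
          _ = |a i - pr j a ha i| + |a i - pr (j-1) a ha i| := by rw [abs_sub_comm]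
      simp only [Pi.sub_apply]
      calc |pr j a ha i - pr (j-1) a ha i|
          ≤ |a i - pr j a ha i| + |a i - pr (j-1) a ha i| := htri
        _ ≤ ε j + ε (j-1) := add_le_add (hπdist j a ha i) (hπdist (j-1) a ha i)
        _ = 3 * ε j := by rw [hε']; ring
  have hWne : ∀ j : ℕ, 1 ≤ j → (W j).Nonempty := fun j hj => ⟨_, hWmem j hj 0 h0⟩
  have hWbd : ∀ (j : ℕ) (w : Fin n → ℝ), w ∈ W j → ∀ i, |w i| ≤ 3 * ε j := by
    intro j w hw
    rw [hWdef] at hw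
    simp only at hw
    exact (Finset.mem_filter.mp hw).2
  have hWcard : ∀ j : ℕ, 1 ≤ j → (W j).card ≤ (C (ε j))^2 := by
    intro j hj
    have h1 : (W j).card ≤ ((V' j ×ˢ V' (j-1)).image
        (fun p : (Fin n → ℝ) × (Fin n → ℝ) => p.1 - p.2)).card := Finset.card_filter_le _ _
    have h2 : ((V' j ×ˢ V' (j-1)).image
        (fun p : (Fin n → ℝ) × (Fin n → ℝ) => p.1 - p.2)).card
        ≤ (V' j).card * (V' (j-1)).card := by
      refine le_trans Finset.card_image_le ?_
      rw [Finset.card_product]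
    have h3 : (V' (j-1)).card ≤ C (ε j) := by
      by_cases hj1 : j = 1
      · subst hj1
        simp only [hV'def]
        norm_num
        exact hC1 (ε 1) (hειoc 1)
      · have hj2 : 1 ≤ j - 1 := by omega
        refine (hV'card (j-1) hj2).trans ?_
        exact hanti (hειoc j) (hειoc (j-1)) (hεmono (j-1) j (by omega))
    calc (W j).card ≤ (V' j).card * (V' (j-1)).card := le_trans h1 h2
      _ ≤ C (ε j) * C (ε j) := Nat.mul_le_mul (hV'card j hj) h3
      _ = (C (ε j))^2 := (sq (C (ε j))).symm
  -- per-sign-pattern chaining bound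
  have per_s : ∀ s : Fin n → Bool,
      sSup ((fun a : Fin n → ℝ =>
        (1 / n : ℝ) * |∑ i, (if s i then (1:ℝ) else -1) * a i|) '' A)
      ≤ ε m + ∑ k ∈ Finset.range m,
          (W (k+1)).sup' (hWne (k+1) (by omega))
            (fun w => (1 / n : ℝ) * |∑ i, (if s i then (1:ℝ) else -1) * w i|) := by
    intro s
    have hsup_nonneg : ∀ k ∈ Finset.range m, 0 ≤ (W (k+1)).sup' (hWne (k+1) (by omega))
        (fun w => (1 / n : ℝ) * |∑ i, (if s i then (1:ℝ) else -1) * w i|) := by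
      intro k _
      have hmem := hWmem (k+1) (by omega) 0 h0
      have hle := Finset.le_sup'
        (fun w => (1 / n : ℝ) * |∑ i, (if s i then (1:ℝ) else -1) * w i|) hmem
      refine le_trans ?_ hle
      positivity
    apply Real.sSup_le
    · rintro x ⟨a, ha, rfl⟩
      set F : ℕ → ℝ := fun j => ∑ i, (if s i then (1:ℝ) else -1) * pr j a ha i with hF
      have hF0 : F 0 = 0 := by rw [hF]; simp [hπ0 a ha]
      have tele : ∑ k ∈ Finset.range m, (F (k+1) - F k) = F m - F 0 :=
        Finset.sum_range_sub F m
      have hsplit : ∑ i, (if s i then (1:ℝ) else -1) * a i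
          = (∑ i, (if s i then (1:ℝ) else -1) * (a i - pr m a ha i))
            + ∑ k ∈ Finset.range m, (F (k+1) - F k) := by
        rw [tele, hF0, sub_zero, hF]
        rw [← Finset.sum_add_distrib]
        apply Finset.sum_congr rfl
        intro i _
        ring
      calc (1 / n : ℝ) * |∑ i, (if s i then (1:ℝ) else -1) * a i|
          ≤ (1 / n : ℝ) * (|∑ i, (if s i then (1:ℝ) else -1) * (a i - pr m a ha i)|
              + ∑ k ∈ Finset.range m, |F (k+1) - F k|) := by
            apply mul_le_mul_of_nonneg_left _ (by positivity)
            rw [hsplit]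
            refine (abs_add_le _ _).trans ?_
            exact add_le_add_right (Finset.abs_sum_le_sum_abs _ _) _
        _ = (1 / n : ℝ) * |∑ i, (if s i then (1:ℝ) else -1) * (a i - pr m a ha i)|
              + ∑ k ∈ Finset.range m, (1 / n : ℝ) * |F (k+1) - F k| := by
            rw [mul_add, Finset.mul_sum]
        _ ≤ ε m + ∑ k ∈ Finset.range m,
              (W (k+1)).sup' (hWne (k+1) (by omega))
                (fun w => (1 / n : ℝ) * |∑ i, (if s i then (1:ℝ) else -1) * w i|) := by
            apply add_le_add
            · have habs : |∑ i, (if s i then (1:ℝ) else -1) * (a i - pr m a ha i)|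
                  ≤ (n : ℝ) * ε m := by
                calc |∑ i, (if s i then (1:ℝ) else -1) * (a i - pr m a ha i)|
                    ≤ ∑ i, |(if s i then (1:ℝ) else -1) * (a i - pr m a ha i)| :=
                      Finset.abs_sum_le_sum_abs _ _
                  _ ≤ ∑ _i : Fin n, ε m := by
                      apply Finset.sum_le_sum
                      intro i _
                      rw [abs_mul]
                      have h1 : |(if s i then (1:ℝ) else -1)| = 1 := by
                        by_cases h : s i <;> simp [h]
                      rw [h1, one_mul]
                      exact hπdist m a ha i
                  _ = (n : ℝ) * ε m := by rw [Finset.sum_const]; simp [mul_comm]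
              calc (1 / n : ℝ) * |∑ i, (if s i then (1:ℝ) else -1) * (a i - pr m a ha i)|
                  ≤ (1 / n : ℝ) * ((n : ℝ) * ε m) :=
                    mul_le_mul_of_nonneg_left habs (by positivity)
                _ = ε m := by field_simp
            · apply Finset.sum_le_sum
              intro k hk
              have hdiff : F (k+1) - F k
                  = ∑ i, (if s i then (1:ℝ) else -1) * (pr (k+1) a ha i - pr k a ha i) := by
                rw [hF]
                rw [← Finset.sum_sub_distrib]
                apply Finset.sum_congr rfl
                intro i _
                ring
              rw [hdiff]
              have hmem := hWmem (k+1) (by omega) a ha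
              have hle := Finset.le_sup'
                (fun w => (1 / n : ℝ) * |∑ i, (if s i then (1:ℝ) else -1) * w i|) hmem
              refine le_trans (le_of_eq ?_) hle
              simp only [Nat.add_sub_cancel, Pi.sub_apply]
    · have h1 : 0 ≤ ∑ k ∈ Finset.range m, (W (k+1)).sup' (hWne (k+1) (by omega))
          (fun w => (1 / n : ℝ) * |∑ i, (if s i then (1:ℝ) else -1) * w i|) :=
        Finset.sum_nonneg hsup_nonneg
      have h2 := hεpos m
      linarith
  -- average the chaining bound over sign patterns
  have hcard2n : (Finset.univ : Finset (Fin n → Bool)).card = 2 ^ n := by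
    simp [Finset.card_univ]
  have avg_bound : (1 / 2 ^ n : ℝ) * ∑ s : Fin n → Bool,
      sSup ((fun a : Fin n → ℝ =>
        (1 / n : ℝ) * |∑ i, (if s i then (1:ℝ) else -1) * a i|) '' A)
      ≤ ε m + ∑ k ∈ Finset.range m, (1 / 2 ^ n : ℝ) * ∑ s : Fin n → Bool,
          (W (k+1)).sup' (hWne (k+1) (by omega))
            (fun w => (1 / n : ℝ) * |∑ i, (if s i then (1:ℝ) else -1) * w i|) := by
    calc (1 / 2 ^ n : ℝ) * ∑ s : Fin n → Bool,
        sSup ((fun a : Fin n → ℝ =>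
          (1 / n : ℝ) * |∑ i, (if s i then (1:ℝ) else -1) * a i|) '' A)
        ≤ (1 / 2 ^ n : ℝ) * ∑ s : Fin n → Bool,
            (ε m + ∑ k ∈ Finset.range m,
              (W (k+1)).sup' (hWne (k+1) (by omega))
                (fun w => (1 / n : ℝ) * |∑ i, (if s i then (1:ℝ) else -1) * w i|)) :=
          mul_le_mul_of_nonneg_left (Finset.sum_le_sum fun s _ => per_s s) (by positivity)
      _ = ε m + ∑ k ∈ Finset.range m, (1 / 2 ^ n : ℝ) * ∑ s : Fin n → Bool,
            (W (k+1)).sup' (hWne (k+1) (by omega))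
              (fun w => (1 / n : ℝ) * |∑ i, (if s i then (1:ℝ) else -1) * w i|) := by
          rw [Finset.sum_add_distrib, Finset.sum_comm, mul_add,
            Finset.sum_const, hcard2n, nsmul_eq_mul, Finset.mul_sum]
          congr 1
          push_cast
          field_simp
  -- Massart bound for each scale
  have hMassart : ∀ k ∈ Finset.range m,
      (1 / 2 ^ n : ℝ) * ∑ s : Fin n → Bool,
        (W (k+1)).sup' (hWne (k+1) (by omega))
          (fun w => (1 / n : ℝ) * |∑ i, (if s i then (1:ℝ) else -1) * w i|)
      ≤ 6 * ε (k+1) * g (ε (k+1)) / Real.sqrt n := by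
    intro k hk
    have h3ε : (0:ℝ) < 3 * ε (k+1) := by have := hεpos (k+1); linarith
    have hms := massart n hn (W (k+1)) (hWne (k+1) (by omega)) (3 * ε (k+1)) h3ε
      (hWbd (k+1))
    refine hms.trans ?_
    have hcd : (((W (k+1)).card : ℝ)) ≤ ((C (ε (k+1)) : ℝ))^2 := by
      exact_mod_cast hWcard (k+1) (by omega)
    have hC1' : (1:ℝ) ≤ (C (ε (k+1)) : ℝ) := by
      exact_mod_cast hC1 (ε (k+1)) (hειoc (k+1))
    have hcardpos : (1:ℝ) ≤ ((W (k+1)).card : ℝ) := by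
      exact_mod_cast Finset.card_pos.mpr (hWne (k+1) (by omega))
    have hlog : Real.log (2 * (W (k+1)).card) ≤ 2 * Real.log (2 * C (ε (k+1))) := by
      have h1 : (2:ℝ) * (W (k+1)).card ≤ (2 * (C (ε (k+1)) : ℝ))^2 := by nlinarith
      calc Real.log (2 * (W (k+1)).card)
          ≤ Real.log ((2 * (C (ε (k+1)) : ℝ))^2) := Real.log_le_log (by linarith) h1
        _ = 2 * Real.log (2 * C (ε (k+1))) := by rw [Real.log_pow]; push_cast; ring
    have hsqrt : Real.sqrt (2 * Real.log (2 * (W (k+1)).card)) ≤ 2 * g (ε (k+1)) := by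
      calc Real.sqrt (2 * Real.log (2 * (W (k+1)).card))
          ≤ Real.sqrt (4 * Real.log (2 * C (ε (k+1)))) := Real.sqrt_le_sqrt (by linarith)
        _ = 2 * g (ε (k+1)) := by
            rw [hg]
            simp only
            rw [show (4:ℝ) * Real.log (2 * C (ε (k+1)))
              = 2^2 * Real.log (2 * C (ε (k+1))) by norm_num]
            rw [Real.sqrt_mul (by norm_num : (0:ℝ) ≤ (2:ℝ)^2)]
            rw [Real.sqrt_sq (by norm_num : (0:ℝ) ≤ (2:ℝ))]
    calc 3 * ε (k+1) * Real.sqrt (2 * Real.log (2 * (W (k+1)).card)) / Real.sqrt n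
        ≤ 3 * ε (k+1) * (2 * g (ε (k+1))) / Real.sqrt n := by
          gcongr
      _ = 6 * ε (k+1) * g (ε (k+1)) / Real.sqrt n := by ring
  -- compare each term with an integral
  have hstep : ∀ k ∈ Finset.range m,
      6 * ε (k+1) * g (ε (k+1)) / Real.sqrt n
      ≤ 12 / Real.sqrt n * ∫ t in ε (k+2)..ε (k+1), g t := by
    intro k hk
    have hab : ε (k+2) ≤ ε (k+1) := hεmono (k+1) (k+2) (by omega)
    have hsub : Set.uIcc (ε (k+2)) (ε (k+1)) ⊆ Set.Ioc 0 B := by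
      rw [Set.uIcc_of_le hab]
      intro t ht
      exact ⟨lt_of_lt_of_le (hεpos (k+2)) ht.1, le_trans ht.2 (hειoc (k+1)).2⟩
    have hint : IntervalIntegrable g MeasureTheory.volume (ε (k+2)) (ε (k+1)) :=
      hg_int _ _ hsub
    have hlow : ∀ t ∈ Set.Icc (ε (k+2)) (ε (k+1)), g (ε (k+1)) ≤ g t := by
      intro t ht
      have htIoc : t ∈ Set.Ioc 0 B := hsub (by rw [Set.uIcc_of_le hab]; exact ht)
      exact hg_anti htIoc (hειoc (k+1)) ht.2
    have hconst := intervalIntegral.integral_mono_on hab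
      (intervalIntegrable_const) hint hlow
    rw [intervalIntegral.integral_const, smul_eq_mul] at hconst
    have hlen : ε (k+1) - ε (k+2) = ε (k+1) / 2 := by
      have h := hεsucc (k+1)
      linarith
    rw [hlen] at hconst
    have hgn : 0 ≤ g (ε (k+1)) := Real.sqrt_nonneg _
    have h6 : 6 * ε (k+1) * g (ε (k+1)) ≤ 12 * ∫ t in ε (k+2)..ε (k+1), g t := by
      nlinarith
    calc 6 * ε (k+1) * g (ε (k+1)) / Real.sqrt n
        ≤ (12 * ∫ t in ε (k+2)..ε (k+1), g t) / Real.sqrt n := by gcongr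
      _ = 12 / Real.sqrt n * ∫ t in ε (k+2)..ε (k+1), g t := by ring
  -- sum of adjacent integrals
  have hsum_int : ∑ k ∈ Finset.range m, ∫ t in ε (k+2)..ε (k+1), g t
      = ∫ t in ε (m+1)..(ε 1), g t := by
    have hadj := intervalIntegral.sum_integral_adjacent_intervals
      (a := fun i => ε (m+1-i)) (μ := MeasureTheory.volume) (f := g) (n := m) ?hint
    case hint =>
      intro i hi
      apply hg_int
      rw [Set.uIcc_of_le (hεmono (m+1-(i+1)) (m+1-i) (by omega))]
      intro t ht
      exact ⟨lt_of_lt_of_le (hεpos _) ht.1, le_trans ht.2 (hειoc _).2⟩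
    rw [show m+1-0 = m+1 from rfl, show m+1-m = 1 by omega] at hadj
    rw [← hadj]
    conv_lhs => rw [← Finset.sum_range_reflect]
    apply Finset.sum_congr rfl
    intro i hi
    have hi' := Finset.mem_range.mp hi
    have h1 : m - 1 - i + 2 = m + 1 - i := by omega
    have h2 : m - 1 - i + 1 = m + 1 - (i+1) := by omega
    rw [h1, h2]
  -- the summed integral is at most the full integral
  have hι1B : ε 1 ≤ B := (hειoc 1).2
  have hδε : δ ≤ ε (m+1) := hδ_lt.le
  have hεm1ε1 : ε (m+1) ≤ ε 1 := hεmono 1 (m+1) (by omega)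
  have hi1 : IntervalIntegrable g MeasureTheory.volume δ (ε (m+1)) := by
    apply hg_int
    rw [Set.uIcc_of_le hδε]
    intro t ht
    exact ⟨lt_of_lt_of_le hδ0 ht.1, le_trans ht.2 (hειoc (m+1)).2⟩
  have hi2 : IntervalIntegrable g MeasureTheory.volume (ε (m+1)) (ε 1) := by
    apply hg_int
    rw [Set.uIcc_of_le hεm1ε1]
    intro t ht
    exact ⟨lt_of_lt_of_le (hεpos (m+1)) ht.1, le_trans ht.2 hι1B⟩
  have hi3 : IntervalIntegrable g MeasureTheory.volume (ε 1) B := by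
    apply hg_int
    rw [Set.uIcc_of_le hι1B]
    intro t ht
    exact ⟨lt_of_lt_of_le (hεpos 1) ht.1, ht.2⟩
  have hsplit2 : ∫ t in δ..B, g t = (∫ t in δ..ε (m+1), g t)
      + (∫ t in ε (m+1)..(ε 1), g t) + (∫ t in (ε 1)..B, g t) := by
    have e1 := intervalIntegral.integral_add_adjacent_intervals hi1 hi2
    have e2 := intervalIntegral.integral_add_adjacent_intervals (hi1.trans hi2) hi3
    rw [← e2, ← e1]
  have hpiece1 : 0 ≤ ∫ t in δ..ε (m+1), g t :=
    intervalIntegral.integral_nonneg hδε (fun u _ => Real.sqrt_nonneg _)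
  have hpiece3 : 0 ≤ ∫ t in (ε 1)..B, g t :=
    intervalIntegral.integral_nonneg hι1B (fun u _ => Real.sqrt_nonneg _)
  have hmono_int : ∫ t in ε (m+1)..(ε 1), g t ≤ ∫ t in δ..B, g t := by
    rw [hsplit2]
    linarith
  -- final combination
  calc (1 / 2 ^ n : ℝ) * ∑ s : Fin n → Bool,
      sSup ((fun a : Fin n → ℝ =>
        (1 / n : ℝ) * |∑ i, (if s i then (1:ℝ) else -1) * a i|) '' A)
      ≤ ε m + ∑ k ∈ Finset.range m, (1 / 2 ^ n : ℝ) * ∑ s : Fin n → Bool,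
          (W (k+1)).sup' (hWne (k+1) (by omega))
            (fun w => (1 / n : ℝ) * |∑ i, (if s i then (1:ℝ) else -1) * w i|) := avg_bound
    _ ≤ ε m + ∑ k ∈ Finset.range m, 12 / Real.sqrt n * ∫ t in ε (k+2)..ε (k+1), g t := by
        apply add_le_add_right
        exact Finset.sum_le_sum fun k hk => (hMassart k hk).trans (hstep k hk)
    _ = ε m + 12 / Real.sqrt n * ∑ k ∈ Finset.range m, ∫ t in ε (k+2)..ε (k+1), g t := by
        rw [Finset.mul_sum]
    _ = ε m + 12 / Real.sqrt n * ∫ t in ε (m+1)..(ε 1), g t := by rw [hsum_int]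
    _ ≤ 4 * δ + 12 / Real.sqrt n * ∫ t in δ..B, g t := by
        apply add_le_add hεm_le4
        exact mul_le_mul_of_nonneg_left hmono_int (by positivity)
end
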